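/- arXiv:2009.08555 — 3 statements merged into one kernel-verified Lean document; each statement's English description precedes it below -/
import Mathlib

section
/- Let d ≥ 1 and N = 2^r. (i) There exists a universal constant c > 0 such that every probability distribution p = (p_ω) on {−N/2+1,…,N/2}^d satisfies Γ(p) ≥ c·log(N). (ii) There exists a constant C_d > 0 depending only on d such that if p_ω = C_{N,d}·(q_ω)^{−2} for all ω, where C_{N,d} = ( Σ_ω (q_ω)^{−2} )^{−1} is the normalizing constant making p a probability distribution, then Γ(p) ≤ C_d·log(N). -/
open MeasureTheory
open scoped BigOperators ENNReal

noncomputable section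

/-- The `ℓ²`-norm of a finitely indexed complex vector. -/
def l2norm {ι : Type*} [Fintype ι] (v : ι → ℂ) : ℝ := Real.sqrt (∑ i, ‖v i‖ ^ 2)

/-- The `ℓ¹`-norm of a finitely indexed complex vector. -/
def l1norm {ι : Type*} [Fintype ι] (v : ι → ℂ) : ℝ := ∑ i, ‖v i‖

/-- The `ℓ^{2,1}`-norm of a matrix (rows indexed by `ι`, columns by `κ`). -/
def l21norm {ι κ : Type*} [Fintype ι] [Fintype κ] (X : ι → κ → ℂ) : ℝ := ∑ i, l2norm (X i)

/-- The `ℓ^{2,2}` (Frobenius) norm of a matrix. -/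
def l22norm {ι κ : Type*} [Fintype ι] [Fintype κ] (X : ι → κ → ℂ) : ℝ :=
  Real.sqrt (∑ i, ∑ j, ‖X i j‖ ^ 2)

/-- Best `s`-term approximation error in the `ℓ¹`-norm. -/
def sigma1 {ι : Type*} [Fintype ι] (s : ℕ) (x : ι → ℂ) : ℝ :=
  sInf { t | ∃ z : ι → ℂ, {i | z i ≠ 0}.ncard ≤ s ∧ t = l1norm (fun i => x i - z i) }

/-- Best `s`-term (row-sparse) approximation error in the `ℓ^{2,1}`-norm. -/
def sigma21 {ι κ : Type*} [Fintype ι] [Fintype κ] (s : ℕ) (X : ι → κ → ℂ) : ℝ :=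
  sInf { t | ∃ Z : ι → κ → ℂ, {i | Z i ≠ 0}.ncard ≤ s ∧
    t = l21norm (fun i j => X i j - Z i j) }

/-- Cyclic successor on `Fin N`. -/
def cyc {N : ℕ} (i : Fin N) : Fin N := ⟨(i.val + 1) % N, Nat.mod_lt _ i.pos⟩

/-- One-dimensional periodic discrete gradient. -/
def grad1 {N : ℕ} (x : Fin N → ℂ) : Fin N → ℂ := fun i => x (cyc i) - x i

/-- One-dimensional TV semi-norm. -/
def tv1 {N : ℕ} (x : Fin N → ℂ) : ℝ := l1norm (grad1 x)

/-- `j`-th partial (periodic) discrete derivative on `d`-dimensional images. -/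
def pgrad {N d : ℕ} (j : Fin d) (x : (Fin d → Fin N) → ℂ) : (Fin d → Fin N) → ℂ :=
  fun i => x (Function.update i j (cyc (i j))) - x i

/-- Anisotropic discrete gradient (all partial derivatives stacked into one vector). -/
def agrad {N d : ℕ} (x : (Fin d → Fin N) → ℂ) : Fin d × (Fin d → Fin N) → ℂ :=
  fun q => pgrad q.1 x q.2

/-- Anisotropic TV semi-norm. -/
def tvA {N d : ℕ} (x : (Fin d → Fin N) → ℂ) : ℝ := l1norm (agrad x)

/-- Isotropic discrete gradient (partial derivatives as columns of a matrix). -/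
def igrad {N d : ℕ} (x : (Fin d → Fin N) → ℂ) : (Fin d → Fin N) → Fin d → ℂ :=
  fun i j => pgrad j x i

/-- Isotropic TV semi-norm. -/
def tvI {N d : ℕ} (x : (Fin d → Fin N) → ℂ) : ℝ := l21norm (igrad x)

/-- Frequency `ϱ(i) = (-1)^i ⌊i/2⌋` associated with the (1-based) row index `i`. -/
def varrho (N : ℕ) (i : Fin N) : ℤ := (-1) ^ (i.val + 1) * (((i.val + 1) / 2 : ℕ) : ℤ)

/-- One-dimensional DFT matrix, rows ordered by `ϱ`. -/
def dft (N : ℕ) : Matrix (Fin N) (Fin N) ℂ :=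
  Matrix.of fun i j =>
    Complex.exp (-(2 * (Real.pi : ℂ) * Complex.I * ((varrho N i : ℤ) : ℂ) * (j.val : ℂ)) / (N : ℂ))

/-- `d`-dimensional DFT matrix (Kronecker product of `d` copies of `dft N`). -/
def dftD (N d : ℕ) : Matrix (Fin d → Fin N) (Fin d → Fin N) ℂ :=
  Matrix.of fun i j => ∏ k, dft N (i k) (j k)

/-- `ω̄ = max {1, |ω|}`. -/
def obar (ω : ℤ) : ℝ := max 1 |(ω : ℝ)|

/-- The largest product of `k` of the values `w i` (as a sup over `k`-subsets). -/
def maxProd {d : ℕ} (k : ℕ) (w : Fin d → ℝ) : ℝ :=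
  sSup { t | ∃ S : Finset (Fin d), S.card = k ∧ t = ∏ i ∈ S, w i }

/-- The square `q_ω ^ 2` of the quantity `q_ω`: the product of the `⌈d/2⌉` largest
values times the product of the `⌊d/2⌋` largest values (valid since all `w i ≥ 1`). -/
def qsq {d : ℕ} (w : Fin d → ℝ) : ℝ := maxProd ((d + 1) / 2) w * maxProd (d / 2) w

/-- `q_ω ^ 2` evaluated at the frequency `ω` of a `d`-dimensional row index. -/
def qsqFreq {N d : ℕ} (i : Fin d → Fin N) : ℝ := qsq fun k => obar (varrho N (i k))

/-- The discrete measure on a finite type with density `w`. -/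
def discMeasure {α : Type*} [Fintype α] [MeasurableSpace α] (w : α → ℝ) : Measure α :=
  ∑ a : α, ENNReal.ofReal (w a) • Measure.dirac a

/-- `xh` is a minimizer of `min tv z` subject to `‖A z - y‖₂ ≤ η`. -/
def IsMinimizer {R C : Type*} [Fintype R] [Fintype C]
    (tv : (C → ℂ) → ℝ) (A : Matrix R C ℂ) (y : R → ℂ) (η : ℝ) (xh : C → ℂ) : Prop :=
  l2norm (A.mulVec xh - y) ≤ η ∧
    ∀ z : C → ℂ, l2norm (A.mulVec z - y) ≤ η → tv xh ≤ tv z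

/-- The scaled row-subsampled matrix `(1/√mTot) P_Ω F` with rows `row k` of `F`. -/
def subMat {ι α : Type*} [Fintype α] (F : Matrix α α ℂ) (mTot : ℕ) (row : ι → α) :
    Matrix ι α ℂ :=
  Matrix.of fun k j => (((Real.sqrt mTot)⁻¹ : ℝ) : ℂ) * F (row k) j

/-- Entry `v_a(b/2^r)` of the sequency-ordered Walsh--Hadamard matrix. -/
def walshEntry (r a b : ℕ) : ℂ :=
  (-1 : ℂ) ^ (∑ i ∈ Finset.range r,
    ((if Nat.testBit a i then 1 else 0) + (if Nat.testBit a (i + 1) then 1 else 0)) *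
      (if Nat.testBit b (r - 1 - i) then (1 : ℕ) else 0))

/-- One-dimensional sequency-ordered discrete Walsh--Hadamard transform. -/
def walsh1 (r : ℕ) : Matrix (Fin (2 ^ r)) (Fin (2 ^ r)) ℂ :=
  Matrix.of fun a b => walshEntry r a.val b.val

/-- `d`-dimensional sequency-ordered discrete Walsh--Hadamard transform. -/
def walshD (r d : ℕ) : Matrix (Fin d → Fin (2 ^ r)) (Fin d → Fin (2 ^ r)) ℂ :=
  Matrix.of fun a b => ∏ k, walsh1 r (a k) (b k)

/-- `ℓ∞`-norm of a multi-index. -/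
def linfN {d N : ℕ} (i : Fin d → Fin N) : ℝ := ⨆ k, ((i k : ℕ) : ℝ)

/-- Discretized, `ℓ²`-normalized one-dimensional Haar wavelet `ψ^{(e)}_{j,n}` on `Fin (2^r)`. -/
def haar1 (r j n : ℕ) (e : Bool) : Fin (2 ^ r) → ℂ := fun t =>
  if n * 2 ^ (r - j) ≤ t.val ∧ t.val < n * 2 ^ (r - j) + 2 ^ (r - j - 1) then
    (((2 : ℝ) ^ (((j : ℝ) - (r : ℝ)) / 2) : ℝ) : ℂ)
  else if n * 2 ^ (r - j) + 2 ^ (r - j - 1) ≤ t.val ∧ t.val < (n + 1) * 2 ^ (r - j) then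
    (if e then (-1 : ℂ) else 1) * (((2 : ℝ) ^ (((j : ℝ) - (r : ℝ)) / 2) : ℝ) : ℂ)
  else 0

/-- Index set for the `d`-dimensional discrete Haar wavelet basis at resolution `2^r`. -/
def HaarIdx (r d : ℕ) : Type :=
  Unit ⊕ (Σ j : Fin r, (Fin d → Fin (2 ^ (j : ℕ))) × { e : Fin d → Bool // e ≠ fun _ => false })

instance (r d : ℕ) : Fintype (HaarIdx r d) :=
  inferInstanceAs (Fintype (Unit ⊕
    (Σ j : Fin r, (Fin d → Fin (2 ^ (j : ℕ))) × { e : Fin d → Bool // e ≠ fun _ => false })))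

/-- The `d`-dimensional discrete Haar wavelet transform: the matrix whose columns are the
`d`-dimensional tensor-product discrete Haar basis vectors. -/
def haarD (r d : ℕ) : Matrix (Fin d → Fin (2 ^ r)) (HaarIdx r d) ℂ :=
  Matrix.of fun t c =>
    match c with
    | Sum.inl _ => ∏ k, haar1 r 0 0 false (t k)
    | Sum.inr ⟨j, n, e⟩ => ∏ k, haar1 r (j : ℕ) ((n k) : ℕ) (e.val k) (t k)

/-- `A` has the restricted isometry property of order `s` with constant `δ_s ≤ δ`. -/
def HasRIP {R C : Type*} [Fintype R] [Fintype C] (A : Matrix R C ℂ) (s : ℕ) (δ : ℝ) : Prop :=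
  ∀ x : C → ℂ, {i | x i ≠ 0}.ncard ≤ s →
    (1 - δ) * l2norm x ^ 2 ≤ l2norm (A.mulVec x) ^ 2 ∧
      l2norm (A.mulVec x) ^ 2 ≤ (1 + δ) * l2norm x ^ 2

/-- The `ℓ^{2,2}`-robust null space property of order `s` with constants `ρ, γ`,
for matrices with `M` columns. -/
def RNSP22 (M : ℕ) {m N : ℕ} (A : Matrix (Fin m) (Fin N) ℂ) (s : ℕ) (ρ γ : ℝ) : Prop :=
  ∀ (X : Fin N → Fin M → ℂ) (Δ : Finset (Fin N)), Δ.card ≤ s →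
    l22norm (fun i j => if i ∈ Δ then X i j else 0) ≤
      ρ / Real.sqrt s * l21norm (fun i j => if i ∈ Δ then (0 : ℂ) else X i j) +
        γ * l22norm (fun k j => ∑ i, A k i * X i j)

end
noncomputable section


section AuxOptimalDensity
open Finset

lemma maxProd_bddAbove {d : ℕ} (k : ℕ) (w : Fin d → ℝ) :
    BddAbove { t | ∃ S : Finset (Fin d), S.card = k ∧ t = ∏ i ∈ S, w i } := by
  apply Set.Finite.bddAbove
  apply Set.Finite.subset (Set.finite_range (fun S : Finset (Fin d) => ∏ i ∈ S, w i))
  rintro t ⟨S, -, rfl⟩; exact ⟨S, rfl⟩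

lemma le_maxProd {d k : ℕ} (w : Fin d → ℝ) (S : Finset (Fin d))
    (hS : S.card = k) : (∏ i ∈ S, w i) ≤ maxProd k w :=
  le_csSup (maxProd_bddAbove k w) ⟨S, hS, rfl⟩

lemma one_le_maxProd {d k : ℕ} {w : Fin d → ℝ} (hw : ∀ i, 1 ≤ w i) (hk : k ≤ d) :
    1 ≤ maxProd k w := by
  obtain ⟨S, -, hS⟩ := Finset.exists_subset_card_eq (s := (univ : Finset (Fin d))) (n := k)
    (by simpa using hk)
  calc (1:ℝ) = ∏ i ∈ S, 1 := by simp
    _ ≤ ∏ i ∈ S, w i := Finset.prod_le_prod (by simp) (fun i _ => hw i)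
    _ ≤ maxProd k w := le_maxProd w S hS

lemma maxProd_le_pow {d k : ℕ} {w : Fin d → ℝ} {M : ℝ} (hw1 : ∀ i, 1 ≤ w i)
    (hwM : ∀ i, w i ≤ M) (hM : 1 ≤ M) (hk : k ≤ d) : maxProd k w ≤ M ^ k := by
  apply csSup_le
  · obtain ⟨S, -, hS⟩ := Finset.exists_subset_card_eq (s := (univ : Finset (Fin d))) (n := k)
      (by simpa using hk)
    exact ⟨_, S, hS, rfl⟩
  · rintro t ⟨S, hS, rfl⟩
    calc ∏ i ∈ S, w i ≤ ∏ i ∈ S, M :=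
          Finset.prod_le_prod (fun i _ => le_trans zero_le_one (hw1 i)) (fun i _ => hwM i)
      _ = M ^ S.card := by rw [Finset.prod_const]
      _ = M ^ k := by rw [hS]

lemma one_le_qsq {d : ℕ} {w : Fin d → ℝ} (hw : ∀ i, 1 ≤ w i) : 1 ≤ qsq w := by
  have h1 := one_le_maxProd hw (show (d+1)/2 ≤ d by omega)
  have h2 := one_le_maxProd hw (show d/2 ≤ d by omega)
  calc (1:ℝ) = 1 * 1 := by ring
    _ ≤ qsq w := mul_le_mul h1 h2 zero_le_one (le_trans zero_le_one h1)

lemma qsq_le_pow {d : ℕ} {w : Fin d → ℝ} {M : ℝ} (hw1 : ∀ i, 1 ≤ w i)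
    (hwM : ∀ i, w i ≤ M) (hM : 1 ≤ M) : qsq w ≤ M ^ d := by
  have h1 := maxProd_le_pow hw1 hwM hM (show (d+1)/2 ≤ d by omega)
  have h2 := maxProd_le_pow hw1 hwM hM (show d/2 ≤ d by omega)
  have := mul_le_mul h1 h2
    (le_trans zero_le_one (one_le_maxProd hw1 (show d/2 ≤ d by omega)))
    (by positivity)
  calc qsq w ≤ M ^ ((d+1)/2) * M ^ (d/2) := this
    _ = M ^ d := by rw [← pow_add]; congr 1; omega

lemma prod_mul_div_le_qsq {d : ℕ} {w : Fin d → ℝ} (hw : ∀ i, 1 ≤ w i)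
    (a b : Fin d) : (∏ i, w i) * (w a / w b) ≤ qsq w := by
  have hwpos : ∀ i, (0:ℝ) < w i := fun i => lt_of_lt_of_le zero_lt_one (hw i)
  have hprodnn : ∀ S : Finset (Fin d), (0:ℝ) ≤ ∏ i ∈ S, w i :=
    fun S => Finset.prod_nonneg (fun i _ => (hwpos i).le)
  -- find S, T with cards (d+1)/2, d/2 and ∏S * ∏T = ∏univ * (w a / w b)
  suffices h : ∃ S T : Finset (Fin d), S.card = (d+1)/2 ∧ T.card = d/2 ∧
      (∏ i, w i) * (w a / w b) ≤ (∏ i ∈ S, w i) * (∏ i ∈ T, w i) by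
    obtain ⟨S, T, hS, hT, hle⟩ := h
    refine hle.trans (mul_le_mul (le_maxProd w S hS) (le_maxProd w T hT) (hprodnn T) ?_)
    exact le_trans (hprodnn S) (le_maxProd w S hS)
  by_cases hab : a = b
  · -- take T any d/2-subset, S = complement
    obtain ⟨T, -, hT⟩ := Finset.exists_subset_card_eq
      (show d/2 ≤ (univ : Finset (Fin d)).card by simp; omega)
    refine ⟨univ \ T, T, ?_, hT, ?_⟩
    · rw [Finset.card_sdiff_of_subset (Finset.subset_univ T), hT, card_univ, Fintype.card_fin]; omega
    · rw [hab, div_self (hwpos b).ne', mul_one, Finset.prod_sdiff (Finset.subset_univ T)]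
  · -- a ≠ b: d ≥ 2
    have hd2 : 2 ≤ d := by
      by_contra h
      interval_cases d
      · exact a.elim0
      · exact hab (Subsingleton.elim a b)
    -- T : contains a, not b, card d/2
    obtain ⟨T', hT'sub, hT'⟩ := Finset.exists_subset_card_eq
      (show d/2 - 1 ≤ ((univ : Finset (Fin d)) \ {a, b}).card by
        rw [Finset.card_sdiff_of_subset (Finset.subset_univ _), card_univ, Fintype.card_fin,
          Finset.card_pair hab]; omega)
    have haT' : a ∉ T' := fun h => by simpa using hT'sub h
    have hbT' : b ∉ T' := fun h => by simpa using hT'sub h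
    set T := insert a T' with hTdef
    have hbT : b ∉ T := by simp [hTdef, hbT', Ne.symm hab]
    have haT : a ∈ T := Finset.mem_insert_self a T'
    have hTcard : T.card = d/2 := by
      rw [hTdef, Finset.card_insert_of_notMem haT', hT']; omega
    have hbU : b ∈ univ \ T := by simp [hbT]
    have haU : a ∉ (univ \ T) \ {b} := by simp [haT]
    set S := insert a ((univ \ T) \ {b}) with hSdef
    have hScard : S.card = (d+1)/2 := by
      rw [hSdef, Finset.card_insert_of_notMem haU, Finset.card_sdiff_of_subset (by simpa using hbU),
        Finset.card_sdiff_of_subset (Finset.subset_univ T), card_univ, Fintype.card_fin, hTcard]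
      simp; omega
    refine ⟨S, T, hScard, hTcard, le_of_eq ?_⟩
    have h1 : ∏ i ∈ S, w i = w a * ∏ i ∈ (univ \ T) \ {b}, w i :=
      Finset.prod_insert haU
    have h2 : ∏ i ∈ univ \ T, w i = w b * ∏ i ∈ (univ \ T) \ {b}, w i :=
      Finset.prod_eq_mul_prod_sdiff_singleton_of_mem hbU w
    have h3 : (∏ i ∈ univ \ T, w i) * ∏ i ∈ T, w i = ∏ i, w i :=
      Finset.prod_sdiff (Finset.subset_univ T)
    have hwb : w b ≠ 0 := (hwpos b).ne'
    calc (∏ i, w i) * (w a / w b)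
        = ((∏ i ∈ univ \ T, w i) * ∏ i ∈ T, w i) * (w a / w b) := by rw [h3]
      _ = ((w b * ∏ i ∈ (univ \ T) \ {b}, w i) * ∏ i ∈ T, w i) * (w a / w b) := by rw [h2]
      _ = (w a * ∏ i ∈ (univ \ T) \ {b}, w i) * ∏ i ∈ T, w i := by field_simp
      _ = (∏ i ∈ S, w i) * ∏ i ∈ T, w i := by rw [h1]

def ff {N : ℕ} (x : Fin N) : ℕ := max 1 ((x.val + 1) / 2)

def ll {N : ℕ} (x : Fin N) : ℕ := Nat.log 2 (ff x)

lemma obar_varrho {N : ℕ} (x : Fin N) : obar (varrho N x) = (ff x : ℝ) := by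
  unfold obar varrho ff
  push_cast
  rw [abs_mul, abs_pow, abs_neg, abs_one, one_pow, one_mul, abs_of_nonneg (by positivity)]
  norm_cast

lemma one_le_ff {N : ℕ} (x : Fin N) : 1 ≤ ff x := le_max_left _ _

lemma pow_ll_le {N : ℕ} (x : Fin N) : 2 ^ (ll x) ≤ ff x :=
  Nat.pow_log_le_self 2 (by have := one_le_ff x; omega)

lemma ff_lt_pow {N : ℕ} (x : Fin N) : ff x < 2 ^ (ll x + 1) :=
  Nat.lt_pow_succ_log_self (by norm_num) _

lemma ff_le {r : ℕ} (hr : 1 ≤ r) (x : Fin (2 ^ r)) : ff x ≤ 2 ^ (r - 1) := by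
  have hx : x.val < 2 ^ r := x.isLt
  have h2 : 2 ^ r = 2 * 2 ^ (r - 1) := by
    rw [← pow_succ']; congr 1; omega
  have h1 : 1 ≤ 2 ^ (r-1) := Nat.one_le_two_pow
  unfold ff; omega

lemma ll_lt {r : ℕ} (hr : 1 ≤ r) (x : Fin (2 ^ r)) : ll x < r := by
  have := ff_le hr x
  have h := Nat.log_mono_right (b := 2) this
  rw [Nat.log_pow (by norm_num)] at h
  unfold ll; omega

/-- fiber counting: `#{x : Fin (2^r) | ll x = s} ≤ 2^(s+3)` -/

lemma card_ll_fiber {r : ℕ} (s : ℕ) :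
    ((univ : Finset (Fin (2 ^ r))).filter (fun x => ll x = s)).card ≤ 2 ^ (s + 3) := by
  have h : ((univ : Finset (Fin (2 ^ r))).filter (fun x => ll x = s)).card
      ≤ (Finset.range (2 ^ (s + 2))).card := by
    apply Finset.card_le_card_of_injOn (fun x => x.val)
    · intro x hx
      simp only [Finset.mem_coe, Finset.mem_filter] at hx
      have h1 : ff x < 2 ^ (s + 1) := hx.2 ▸ ff_lt_pow x
      have h2 : (x.val + 1) / 2 ≤ ff x := le_max_right _ _
      simp only [Finset.mem_coe, Finset.mem_range]
      have : 2 ^ (s + 2) = 2 * 2 ^ (s+1) := by ring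
      omega
    · exact fun x _ y _ h => Fin.val_injective h
  rw [Finset.card_range] at h
  calc _ ≤ 2 ^ (s+2) := h
    _ ≤ 2 ^ (s+3) := Nat.pow_le_pow_right (by norm_num) (by omega)

/-- key summation tool -/

lemma sum_ll_le {r : ℕ} (hr : 1 ≤ r) (h : ℕ → ℝ) (hh : ∀ s, 0 ≤ h s) :
    ∑ x : Fin (2 ^ r), h (ll x) ≤ ∑ s ∈ Finset.range r, (2:ℝ) ^ (s + 3) * h s := by
  rw [← Finset.sum_fiberwise_of_maps_to (g := fun x : Fin (2^r) => ll x)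
    (fun x _ => Finset.mem_range.2 (ll_lt hr x))]
  apply Finset.sum_le_sum
  intro s _
  calc ∑ x ∈ (univ.filter (fun x => ll x = s)), h (ll x)
      = ∑ x ∈ (univ.filter (fun x => ll x = s)), h s := by
        apply Finset.sum_congr rfl; intro x hx
        simp only [Finset.mem_filter] at hx; rw [hx.2]
    _ = ((univ.filter (fun x => ll x = s)).card : ℝ) * h s := by
        rw [Finset.sum_const, nsmul_eq_mul]
    _ ≤ (2:ℝ) ^ (s + 3) * h s := by
        apply mul_le_mul_of_nonneg_right _ (hh s)
        calc ((univ.filter (fun x => ll x = s)).card : ℝ)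
            ≤ ((2 ^ (s+3) : ℕ) : ℝ) := by exact_mod_cast card_ll_fiber s
          _ = (2:ℝ) ^ (s+3) := by push_cast; ring

lemma qsqFreq_eq {N d : ℕ} (i : Fin d → Fin N) :
    qsqFreq i = qsq fun k => ((ff (i k) : ℝ)) := by
  unfold qsqFreq; congr 1; funext k; exact obar_varrho (i k)

lemma one_le_qsqFreq {N d : ℕ} (i : Fin d → Fin N) : 1 ≤ qsqFreq i := by
  rw [qsqFreq_eq]
  exact one_le_qsq (fun k => by exact_mod_cast one_le_ff (i k))

lemma qsqFreq_pos {N d : ℕ} (i : Fin d → Fin N) : 0 < qsqFreq i :=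
  lt_of_lt_of_le zero_lt_one (one_le_qsqFreq i)


def bb (d : ℕ) : ℝ := (2:ℝ) ^ ((d:ℝ)⁻¹)

variable {d : ℕ}

lemma one_lt_bb (hd : 1 ≤ d) : 1 < bb d := by
  rw [bb, Real.one_lt_rpow_iff_of_pos (by norm_num)]
  left
  constructor
  · norm_num
  · have : (0:ℝ) < (d:ℝ) := by exact_mod_cast hd
    positivity

lemma bb_pow_d (hd : 1 ≤ d) : (bb d) ^ d = 2 := by
  rw [bb, ← Real.rpow_natCast ((2:ℝ) ^ ((d:ℝ)⁻¹)) d, ← Real.rpow_mul (by norm_num)]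
  rw [inv_mul_cancel₀ (by exact_mod_cast (by omega : d ≠ 0) : (d:ℝ) ≠ 0)]
  exact Real.rpow_one 2

lemma Gbound (hd : 1 ≤ d) {r : ℕ} (hr : 1 ≤ r) (t : ℕ) :
    ∑ y : Fin (2 ^ r), (if ll y ≤ t then (bb d / 2) ^ ll y else 0)
      ≤ (8 * bb d / (bb d - 1)) * (bb d) ^ t := by
  have hb1 : (1:ℝ) < bb d := one_lt_bb hd
  have hbpos : (0:ℝ) < bb d := lt_trans zero_lt_one hb1
  have hγpos : (0:ℝ) < bb d / 2 := by positivity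
  calc ∑ y : Fin (2 ^ r), (if ll y ≤ t then (bb d / 2) ^ ll y else 0)
      ≤ ∑ s ∈ Finset.range r, (2:ℝ) ^ (s + 3) * (if s ≤ t then (bb d / 2) ^ s else 0) := by
        apply sum_ll_le hr (fun s => if s ≤ t then (bb d / 2) ^ s else 0)
        intro s; split <;> positivity
    _ = ∑ s ∈ Finset.range r, (if s ≤ t then 8 * (bb d) ^ s else 0) := by
        apply Finset.sum_congr rfl
        intro s _
        split
        · rw [pow_add]
          have : (2:ℝ)^s * (bb d / 2)^s = (bb d)^s := by
            rw [← mul_pow]; congr 1; field_simp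
          nlinarith [this]
        · ring
    _ = ∑ s ∈ (Finset.range r).filter (fun s => s ≤ t), 8 * (bb d) ^ s :=
        (Finset.sum_filter _ _).symm
    _ ≤ ∑ s ∈ Finset.range (t + 1), 8 * (bb d) ^ s := by
        apply Finset.sum_le_sum_of_subset_of_nonneg
        · intro s hs
          simp only [Finset.mem_filter, Finset.mem_range] at hs ⊢
          omega
        · intro s _ _; positivity
    _ = 8 * (((bb d) ^ (t+1) - 1) / (bb d - 1)) := by
        rw [← Finset.mul_sum, geom_sum_eq (ne_of_gt hb1)]
    _ ≤ (8 * bb d / (bb d - 1)) * (bb d) ^ t := by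
        have h1 : (0:ℝ) < bb d - 1 := by linarith
        have e0 : 8 * (((bb d) ^ (t+1) - 1) / (bb d - 1))
            = (8 * (bb d) ^ (t+1) - 8) / (bb d - 1) := by ring
        have e1 : (8 * bb d / (bb d - 1)) * (bb d) ^ t
            = (8 * (bb d) ^ (t+1)) / (bb d - 1) := by rw [pow_succ]; ring
        rw [e0, e1]
        gcongr
        linarith

def TT (d r : ℕ) (a : Fin d) (i : Fin d → Fin (2 ^ r)) : ℝ :=
  if (∀ k, ll (i k) ≤ ll (i a)) then
    2 * ((2:ℝ) ^ (ll (i a)))⁻¹ * ∏ k, (bb d / 2) ^ (ll (i k)) else 0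

lemma TT_nonneg (a : Fin d) (i : Fin d → Fin (2 ^ r)) : 0 ≤ TT d r a i := by
  unfold TT
  have : (0:ℝ) < bb d := Real.rpow_pos_of_pos (by norm_num) _
  split
  · positivity
  · exact le_refl _

lemma pointwise_bound (hd : 1 ≤ d) (i : Fin d → Fin (2 ^ r)) :
    (qsqFreq i)⁻¹ ≤ ∑ a, TT d r a i := by
  have hbpos : (0:ℝ) < bb d := Real.rpow_pos_of_pos (by norm_num) _
  have hb1 : (1:ℝ) < bb d := one_lt_bb hd
  obtain ⟨a, -, ha⟩ := Finset.exists_max_image Finset.univ (fun k => ll (i k))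
    ⟨⟨0, hd⟩, Finset.mem_univ _⟩
  obtain ⟨b, -, hb⟩ := Finset.exists_min_image Finset.univ (fun k => ll (i k))
    ⟨⟨0, hd⟩, Finset.mem_univ _⟩
  set w : Fin d → ℝ := fun k => ((ff (i k) : ℝ)) with hwdef
  have hw1 : ∀ k, (1:ℝ) ≤ w k := fun k => by
    show (1:ℝ) ≤ ((ff (i k) : ℝ)); exact_mod_cast one_le_ff (i k)
  have hwpos : ∀ k, (0:ℝ) < w k := fun k => lt_of_lt_of_le zero_lt_one (hw1 k)
  have h2L : ∀ k, (2:ℝ) ^ (ll (i k)) ≤ w k := fun k => by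
    show ((2:ℝ) ^ (ll (i k)) : ℝ) ≤ ((ff (i k) : ℝ))
    exact_mod_cast pow_ll_le (i k)
  have hwb : w b ≤ 2 * (2:ℝ) ^ (ll (i b)) := by
    have h := ff_lt_pow (i b)
    have : ((ff (i b) : ℝ)) ≤ ((2 ^ (ll (i b) + 1) : ℕ) : ℝ) := by exact_mod_cast h.le
    calc w b ≤ ((2 ^ (ll (i b) + 1) : ℕ) : ℝ) := this
      _ = 2 * (2:ℝ) ^ (ll (i b)) := by push_cast [pow_succ]; ring
  -- the value of TT a i
  have hTT : TT d r a i = 2 * ((2:ℝ) ^ (ll (i a)))⁻¹ *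
      ((bb d) ^ (∑ k, ll (i k)) / ∏ k, (2:ℝ) ^ (ll (i k))) := by
    rw [TT, if_pos (fun k => ha k (Finset.mem_univ k))]
    congr 1
    rw [← Finset.prod_pow_eq_pow_sum, ← Finset.prod_div_distrib]
    apply Finset.prod_congr rfl
    intro k _
    rw [div_pow]
  have hPpos : (0:ℝ) < ∏ k, (2:ℝ) ^ (ll (i k)) := Finset.prod_pos (fun k _ => by positivity)
  have hTpos : 0 < TT d r a i := by rw [hTT]; positivity
  -- β^{Σℓ} ≥ 2^{ℓ_b}
  have hsum : d * ll (i b) ≤ ∑ k, ll (i k) := by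
    calc d * ll (i b) = ∑ _k : Fin d, ll (i b) := by
          rw [Finset.sum_const, Finset.card_univ, Fintype.card_fin, smul_eq_mul]
      _ ≤ ∑ k, ll (i k) := Finset.sum_le_sum (fun k _ => hb k (Finset.mem_univ k))
  have hbsum : (2:ℝ) ^ (ll (i b)) ≤ (bb d) ^ (∑ k, ll (i k)) := by
    calc (2:ℝ) ^ (ll (i b)) = ((bb d) ^ d) ^ (ll (i b)) := by rw [bb_pow_d hd]
      _ = (bb d) ^ (d * ll (i b)) := by rw [← pow_mul]
      _ ≤ (bb d) ^ (∑ k, ll (i k)) := pow_le_pow_right₀ hb1.le hsum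
  -- main chain
  have key : (TT d r a i)⁻¹ ≤ qsq w := by
    have e1 : (TT d r a i)⁻¹ = (2:ℝ) ^ (ll (i a)) * (∏ k, (2:ℝ) ^ (ll (i k)))
        / (2 * (bb d) ^ (∑ k, ll (i k))) := by
      rw [hTT]
      field_simp
    rw [e1]
    have step1 : (2:ℝ) ^ (ll (i a)) * (∏ k, (2:ℝ) ^ (ll (i k)))
        / (2 * (bb d) ^ (∑ k, ll (i k)))
        ≤ (2:ℝ) ^ (ll (i a)) * (∏ k, (2:ℝ) ^ (ll (i k))) / (2 * (2:ℝ) ^ (ll (i b))) := by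
      apply div_le_div_of_nonneg_left (by positivity) (by positivity)
      nlinarith
    refine step1.trans ?_
    have e2 : (2:ℝ) ^ (ll (i a)) * (∏ k, (2:ℝ) ^ (ll (i k))) / (2 * (2:ℝ) ^ (ll (i b)))
        = (∏ k, (2:ℝ) ^ (ll (i k))) * ((2:ℝ) ^ (ll (i a)) / (2 * (2:ℝ) ^ (ll (i b)))) := by
      ring
    rw [e2]
    have step2 : (∏ k, (2:ℝ) ^ (ll (i k))) * ((2:ℝ) ^ (ll (i a)) / (2 * (2:ℝ) ^ (ll (i b))))
        ≤ (∏ k, w k) * (w a / w b) := by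
      apply mul_le_mul
      · exact Finset.prod_le_prod (fun k _ => by positivity) (fun k _ => h2L k)
      · exact div_le_div₀ (hwpos a).le (h2L a) (hwpos b) hwb
      · positivity
      · exact Finset.prod_nonneg (fun k _ => (hwpos k).le)
    exact step2.trans (prod_mul_div_le_qsq hw1 a b)
  have hq : qsqFreq i = qsq w := qsqFreq_eq i
  calc (qsqFreq i)⁻¹ ≤ TT d r a i := by
        rw [hq]
        have := inv_anti₀ (inv_pos.2 hTpos) key
        rwa [inv_inv] at this
    _ ≤ ∑ a', TT d r a' i :=
        Finset.single_le_sum (fun a' _ => TT_nonneg a' i) (Finset.mem_univ a)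
variable {d r : ℕ}
open Finset

def KK (d : ℕ) : ℝ := 8 * bb d / (bb d - 1)

lemma KK_pos (hd : 1 ≤ d) : 0 < KK d := by
  have hb1 : (1:ℝ) < bb d := one_lt_bb hd
  unfold KK
  apply div_pos (by nlinarith) (by linarith)

lemma sum_TT (hd : 1 ≤ d) (hr : 1 ≤ r) (a : Fin d) :
    ∑ i : Fin d → Fin (2 ^ r), TT d r a i ≤ 16 * (KK d) ^ (d - 1) * r := by
  classical
  have hbpos : (0:ℝ) < bb d := Real.rpow_pos_of_pos (by norm_num) _
  have hb1 : (1:ℝ) < bb d := one_lt_bb hd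
  have hKpos : (0:ℝ) < KK d := KK_pos hd
  set ψ : Fin (2 ^ r) → ℕ → ℝ := fun y t => if ll y ≤ t then (bb d / 2) ^ (ll y) else 0
    with hψ
  have hψnn : ∀ y t, 0 ≤ ψ y t := by
    intro y t; rw [hψ]; dsimp only; split <;> positivity
  -- split TT into a product over the erased set
  have hsplit : ∀ i : Fin d → Fin (2 ^ r), TT d r a i =
      2 * ((2:ℝ) ^ (ll (i a)))⁻¹ * (bb d / 2) ^ (ll (i a)) *
        ∏ k ∈ Finset.univ.erase a, ψ (i k) (ll (i a)) := by
    intro i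
    by_cases h : ∀ k, ll (i k) ≤ ll (i a)
    · rw [TT, if_pos h]
      have e1 : ∏ k ∈ Finset.univ.erase a, ψ (i k) (ll (i a))
          = ∏ k ∈ Finset.univ.erase a, (bb d / 2) ^ (ll (i k)) := by
        apply Finset.prod_congr rfl
        intro k _
        rw [hψ]; dsimp only; rw [if_pos (h k)]
      rw [e1, ← Finset.mul_prod_erase Finset.univ
        (fun k => (bb d / 2) ^ (ll (i k))) (Finset.mem_univ a)]
      ring
    · rw [TT, if_neg h]
      push_neg at h
      obtain ⟨k, hk⟩ := h
      have hka : k ≠ a := by intro hkk; subst hkk; omega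
      have : ψ (i k) (ll (i a)) = 0 := by
        rw [hψ]; dsimp only; rw [if_neg (not_le.mpr hk)]
      rw [Finset.prod_eq_zero (Finset.mem_erase.2 ⟨hka, Finset.mem_univ k⟩) this, mul_zero]
  -- factorize the sum via the splitting equivalence
  set e := (Equiv.piSplitAt a (fun _ : Fin d => Fin (2 ^ r))).symm with he
  have hsum : ∑ i : Fin d → Fin (2 ^ r), TT d r a i
      = ∑ x : Fin (2 ^ r), ∑ g : { k : Fin d // k ≠ a } → Fin (2 ^ r),
          2 * ((2:ℝ) ^ (ll x))⁻¹ * (bb d / 2) ^ (ll x) * ∏ k : { k : Fin d // k ≠ a },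
            ψ (g k) (ll x) := by
    rw [← Equiv.sum_comp e (fun i => TT d r a i), Fintype.sum_prod_type]
    apply Finset.sum_congr rfl; intro x _
    apply Finset.sum_congr rfl; intro g _
    have hea : e (x, g) a = x := by
      rw [he]; simp [Equiv.piSplitAt_symm_apply]
    have hek : ∀ (k : Fin d) (hk : k ≠ a), e (x, g) k = g ⟨k, hk⟩ := by
      intro k hk
      rw [he]; simp [Equiv.piSplitAt_symm_apply, hk]
    rw [hsplit (e (x, g)), hea]
    congr 1
    rw [Finset.prod_subtype (Finset.univ.erase a)
      (p := fun k => k ≠ a) (fun k => by simp [Finset.mem_erase])]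
    apply Finset.prod_congr rfl
    intro k _
    rw [hek k.val k.prop]
  rw [hsum]
  -- bound the inner sums
  have hG : ∀ t : ℕ, ∑ y : Fin (2 ^ r), ψ y t ≤ KK d * (bb d) ^ t := fun t => Gbound hd hr t
  have hGnn : ∀ t : ℕ, 0 ≤ ∑ y : Fin (2 ^ r), ψ y t :=
    fun t => Finset.sum_nonneg (fun y _ => hψnn y t)
  have hcard : Fintype.card { k : Fin d // k ≠ a } = d - 1 := by
    rw [Fintype.card_subtype_compl, Fintype.card_subtype_eq, Fintype.card_fin]
  have hγβ : (bb d / 2) * (bb d) ^ (d - 1) = 1 := by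
    have h2 : (bb d) * (bb d) ^ (d - 1) = 2 := by
      rw [← pow_succ']
      have hdd : d - 1 + 1 = d := by omega
      rw [hdd, bb_pow_d hd]
    field_simp
    linarith
  have hinner : ∀ x : Fin (2 ^ r),
      (∑ g : { k : Fin d // k ≠ a } → Fin (2 ^ r), 2 * ((2:ℝ) ^ (ll x))⁻¹ *
        (bb d / 2) ^ (ll x) * ∏ k : { k : Fin d // k ≠ a }, ψ (g k) (ll x))
      ≤ 2 * (KK d) ^ (d - 1) * ((2:ℝ) ^ (ll x))⁻¹ := by
    intro x
    have h1 : (bb d / 2) ^ (ll x) * ((bb d) ^ (d - 1)) ^ (ll x) = 1 := by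
      rw [← mul_pow, hγβ, one_pow]
    calc (∑ g : { k : Fin d // k ≠ a } → Fin (2 ^ r), 2 * ((2:ℝ) ^ (ll x))⁻¹ *
            (bb d / 2) ^ (ll x) * ∏ k : { k : Fin d // k ≠ a }, ψ (g k) (ll x))
        = 2 * ((2:ℝ) ^ (ll x))⁻¹ * (bb d / 2) ^ (ll x) *
            ((∑ y : Fin (2 ^ r), ψ y (ll x)) ^ (d - 1)) := by
          rw [← Finset.mul_sum,
            ← Fintype.prod_sum (fun (_k : { k : Fin d // k ≠ a }) (y : Fin (2 ^ r)) => ψ y (ll x)),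
            Finset.prod_const, Finset.card_univ, hcard]
      _ ≤ 2 * ((2:ℝ) ^ (ll x))⁻¹ * (bb d / 2) ^ (ll x) *
            ((KK d * (bb d) ^ (ll x)) ^ (d - 1)) := by
          apply mul_le_mul_of_nonneg_left _ (by positivity)
          exact pow_le_pow_left₀ (hGnn (ll x)) (hG (ll x)) (d - 1)
      _ = 2 * (KK d) ^ (d - 1) * ((2:ℝ) ^ (ll x))⁻¹ := by
          rw [mul_pow, pow_right_comm]
          linear_combination (2 * ((2:ℝ) ^ (ll x))⁻¹ * (KK d) ^ (d - 1)) * h1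
  have hsll : ∑ x : Fin (2 ^ r), ((2:ℝ) ^ (ll x))⁻¹ ≤ 8 * r := by
    calc ∑ x : Fin (2 ^ r), ((2:ℝ) ^ (ll x))⁻¹
        ≤ ∑ s ∈ Finset.range r, (2:ℝ) ^ (s + 3) * ((2:ℝ) ^ s)⁻¹ :=
          sum_ll_le hr (fun s => ((2:ℝ) ^ s)⁻¹) (fun s => by positivity)
      _ = ∑ _s ∈ Finset.range r, (8:ℝ) := by
          apply Finset.sum_congr rfl
          intro s _
          rw [pow_add]
          field_simp
          ring
      _ = 8 * r := by rw [Finset.sum_const, Finset.card_range, nsmul_eq_mul]; ring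
  calc (∑ x : Fin (2 ^ r), ∑ g : { k : Fin d // k ≠ a } → Fin (2 ^ r),
          2 * ((2:ℝ) ^ (ll x))⁻¹ * (bb d / 2) ^ (ll x) * ∏ k : { k : Fin d // k ≠ a },
            ψ (g k) (ll x))
      ≤ ∑ x : Fin (2 ^ r), 2 * (KK d) ^ (d - 1) * ((2:ℝ) ^ (ll x))⁻¹ :=
        Finset.sum_le_sum (fun x _ => hinner x)
    _ = 2 * (KK d) ^ (d - 1) * ∑ x : Fin (2 ^ r), ((2:ℝ) ^ (ll x))⁻¹ := by
        rw [← Finset.mul_sum]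
    _ ≤ 2 * (KK d) ^ (d - 1) * (8 * r) := by
        apply mul_le_mul_of_nonneg_left hsll (by positivity)
    _ = 16 * (KK d) ^ (d - 1) * r := by ring

lemma sum_lower_aux {d r : ℕ} (hd : 1 ≤ d) (hr : 1 ≤ r) :
    (r : ℝ) / 2 ≤ ∑ i : Fin d → Fin (2 ^ r), (qsqFreq i)⁻¹ := by
  have hnn : ∀ i : Fin d → Fin (2^r), (0:ℝ) ≤ (qsqFreq i)⁻¹ :=
    fun i => inv_nonneg.2 (qsqFreq_pos i).le
  rcases Nat.lt_or_ge r 2 with hr2 | hr2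
  · -- r = 1 : sum ≥ 1 ≥ r/2
    have i0 : Fin d → Fin (2^r) := fun _ => ⟨0, by positivity⟩
    have key : (1:ℝ) ≤ (qsqFreq (fun _ : Fin d => (⟨0, by positivity⟩ : Fin (2^r))))⁻¹ := by
      rw [qsqFreq_eq]
      have hw1 : ∀ k : Fin d, (1:ℝ) ≤ ((ff (⟨0, by positivity⟩ : Fin (2^r)) : ℝ)) := by
        intro k; norm_num [ff]
      have hq : qsq (fun _ : Fin d => ((ff (⟨0, by positivity⟩ : Fin (2^r)) : ℝ))) ≤ 1 := by
        have := qsq_le_pow (d := d) (w := fun _ => ((ff (⟨0, by positivity⟩ : Fin (2^r)) : ℝ)))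
          (M := 1) hw1 (fun k => by norm_num [ff]) le_rfl
        simpa using this
      have hq1 := one_le_qsq (d := d)
        (w := fun _ : Fin d => ((ff (⟨0, by positivity⟩ : Fin (2^r)) : ℝ))) hw1
      rw [le_inv_comm₀] <;> nlinarith
    calc (r:ℝ)/2 ≤ 1 := by
          have : (r:ℝ) ≤ 2 := by exact_mod_cast Nat.le_of_lt hr2
          linarith
      _ ≤ _ := le_trans key (Finset.single_le_sum (fun i _ => hnn i) (Finset.mem_univ _))
  · -- r ≥ 2 : dyadic blocks
    set N := 2 ^ r with hN
    have hIco : ∀ j : ℕ, j ∈ Finset.range (r-1) → ∀ m ∈ Finset.Ico (2^(j+1)-1) (2^(j+2)-1), m < N := by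
      intro j hj m hm
      rw [Finset.mem_range] at hj
      rw [Finset.mem_Ico] at hm
      have : 2^(j+2) ≤ 2^r := Nat.pow_le_pow_right (by norm_num) (by omega)
      omega
    classical
    set S : ℕ → Finset (Fin N) := fun j =>
      if h : j ∈ Finset.range (r-1) then Finset.attachFin (Finset.Ico (2^(j+1)-1) (2^(j+2)-1)) (hIco j h)
      else ∅ with hS
    set B : ℕ → Finset (Fin d → Fin N) := fun j => Fintype.piFinset (fun _ => S j) with hB
    have hmemS : ∀ j ∈ Finset.range (r-1), ∀ (y : Fin N), y ∈ S j ↔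
        2^(j+1)-1 ≤ y.val ∧ y.val < 2^(j+2)-1 := by
      intro j hj y
      rw [hS]
      simp only [dif_pos hj, Finset.mem_attachFin, Finset.mem_Ico]
    have hdisj : (Finset.range (r-1) : Set ℕ).PairwiseDisjoint B := by
      intro j hj j' hj' hne
      simp only [Finset.disjoint_left]
      intro i hi hi'
      have h1 := (hmemS j (by simpa using hj) (i ⟨0, hd⟩)).1 (by
        exact Fintype.mem_piFinset.1 hi ⟨0, hd⟩)
      have h2 := (hmemS j' (by simpa using hj') (i ⟨0, hd⟩)).1 (by
        exact Fintype.mem_piFinset.1 hi' ⟨0, hd⟩)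
      have e1 : (1:ℕ) ≤ 2^(j+1) := Nat.one_le_two_pow
      have e2 : (1:ℕ) ≤ 2^(j'+1) := Nat.one_le_two_pow
      rcases Nat.lt_or_ge j j' with h | h
      · have : 2^(j+2) ≤ 2^(j'+1) := Nat.pow_le_pow_right (by norm_num) (by omega)
        omega
      · have hlt : j' < j := by omega
        have : 2^(j'+2) ≤ 2^(j+1) := Nat.pow_le_pow_right (by norm_num) (by omega)
        omega
    have hblock : ∀ j ∈ Finset.range (r-1), (1:ℝ) ≤ ∑ i ∈ B j, (qsqFreq i)⁻¹ := by
      intro j hj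
      have hcardS : (S j).card = 2^(j+1) := by
        rw [hS]; simp only [dif_pos hj]
        rw [Finset.card_attachFin, Nat.card_Ico]
        have : (1:ℕ) ≤ 2^(j+1) := Nat.one_le_two_pow
        have h4 : 2^(j+2) = 2 * 2^(j+1) := by ring
        omega
      have hcardB : (B j).card = (2^(j+1))^d := by
        rw [hB]; simp only [Fintype.card_piFinset]
        simp [hcardS]
      have hpoint : ∀ i ∈ B j, (((2:ℝ)^(j+1))^d)⁻¹ ≤ (qsqFreq i)⁻¹ := by
        intro i hi
        rw [qsqFreq_eq]
        have hub : qsq (fun k => ((ff (i k) : ℝ))) ≤ ((2:ℝ)^(j+1)) ^ d := by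
          apply qsq_le_pow
          · intro k; show (1:ℝ) ≤ ((ff (i k) : ℝ)); exact_mod_cast one_le_ff (i k)
          · intro k
            show ((ff (i k) : ℝ)) ≤ (2:ℝ)^(j+1)
            have hk := (hmemS j hj (i k)).1 (Fintype.mem_piFinset.1 hi k)
            have h4 : 2^(j+2) = 2 * 2^(j+1) := by ring
            have : ff (i k) ≤ 2^(j+1) := by
              unfold ff; omega
            calc ((ff (i k) : ℝ)) ≤ ((2^(j+1) : ℕ) : ℝ) := by exact_mod_cast this
              _ = (2:ℝ)^(j+1) := by push_cast; ring
          · have : (1:ℝ) ≤ (2:ℝ)^(j+1) := one_le_pow₀ (by norm_num)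
            exact this
        have h1 : (0:ℝ) < qsq (fun k => ((ff (i k) : ℝ))) := by
          have := one_le_qsq (w := fun k => ((ff (i k) : ℝ)))
            (fun k => by show (1:ℝ) ≤ ((ff (i k) : ℝ)); exact_mod_cast one_le_ff (i k))
          linarith
        exact inv_anti₀ h1 hub
      have hcast : ((B j).card : ℝ) = ((2:ℝ)^(j+1))^d := by
        rw [hcardB]; push_cast; ring
      calc (1:ℝ) = ((B j).card : ℝ) * (((2:ℝ)^(j+1))^d)⁻¹ := by
            rw [hcast, mul_inv_cancel₀ (by positivity)]
        _ ≤ ∑ i ∈ B j, (qsqFreq i)⁻¹ := by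
            rw [← nsmul_eq_mul]
            exact Finset.card_nsmul_le_sum _ _ _ hpoint
    calc (r:ℝ)/2 ≤ ((r:ℝ) - 1) := by
          have : (2:ℝ) ≤ (r:ℝ) := by exact_mod_cast hr2
          linarith
      _ = ((r-1 : ℕ) : ℝ) := by
          have : (1:ℕ) ≤ r := hr
          push_cast [this]; ring
      _ = ∑ _j ∈ Finset.range (r-1), (1:ℝ) := by simp
      _ ≤ ∑ j ∈ Finset.range (r-1), ∑ i ∈ B j, (qsqFreq i)⁻¹ := Finset.sum_le_sum hblock
      _ = ∑ i ∈ (Finset.range (r-1)).biUnion B, (qsqFreq i)⁻¹ :=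
          (Finset.sum_biUnion hdisj).symm
      _ ≤ ∑ i : Fin d → Fin N, (qsqFreq i)⁻¹ :=
          Finset.sum_le_sum_of_subset_of_nonneg (Finset.subset_univ _) (fun i _ _ => hnn i)

lemma sum_upper_aux {d r : ℕ} (hd : 1 ≤ d) (hr : 1 ≤ r) :
    ∑ i : Fin d → Fin (2 ^ r), (qsqFreq i)⁻¹ ≤ 16 * d * (KK d) ^ (d - 1) * r := by
  calc ∑ i : Fin d → Fin (2 ^ r), (qsqFreq i)⁻¹
      ≤ ∑ i : Fin d → Fin (2 ^ r), ∑ a : Fin d, TT d r a i :=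
        Finset.sum_le_sum (fun i _ => pointwise_bound hd i)
    _ = ∑ a : Fin d, ∑ i : Fin d → Fin (2 ^ r), TT d r a i := Finset.sum_comm
    _ ≤ ∑ _a : Fin d, (16 * (KK d) ^ (d - 1) * r) :=
        Finset.sum_le_sum (fun a _ => sum_TT hd hr a)
    _ = d * (16 * (KK d) ^ (d - 1) * r) := by
        rw [Finset.sum_const, Finset.card_univ, Fintype.card_fin, nsmul_eq_mul]
    _ = 16 * d * (KK d) ^ (d - 1) * r := by ring

end AuxOptimalDensity

/-- **Lemma (optimality of the `q`-density).**
(i) For every probability distribution `p` on `{-N/2+1,…,N/2}^d` (given as a density on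
row indices), every admissible constant `Γ` (i.e. `(q_ω)⁻² ≤ Γ p_ω` for all `ω`) satisfies
`Γ ≥ c log N`; in particular `Γ(p) ≥ c log N`.
(ii) If `p_ω = C_{N,d} (q_ω)⁻²` with `C_{N,d}` the normalizing constant, then
`C_d log N` is an admissible constant, i.e. `Γ(p) ≤ C_d log N`. -/
theorem optimal_fourier_density_gamma_bounds :
    (∃ c : ℝ, 0 < c ∧
      ∀ (d r : ℕ), 1 ≤ d → 1 ≤ r →
        ∀ p : (Fin d → Fin (2 ^ r)) → ℝ, (∀ i, 0 ≤ p i) → (∑ i, p i) = 1 →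
          ∀ Γ : ℝ, 0 < Γ → (∀ i : Fin d → Fin (2 ^ r), (qsqFreq i)⁻¹ ≤ Γ * p i) →
            c * Real.log (2 ^ r) ≤ Γ) ∧
    (∃ C : ℕ → ℝ, (∀ d, 0 < C d) ∧
      ∀ (d r : ℕ), 1 ≤ d → 1 ≤ r →
        ∀ cN : ℝ, (∑ i : Fin d → Fin (2 ^ r), cN * (qsqFreq i)⁻¹) = 1 →
          ∀ i : Fin d → Fin (2 ^ r),
            (qsqFreq i)⁻¹ ≤ (C d * Real.log (2 ^ r)) * (cN * (qsqFreq i)⁻¹)) := by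
  have hlog2 : (0:ℝ) < Real.log 2 := Real.log_pos (by norm_num)
  constructor
  · -- part (i)
    refine ⟨(2 * Real.log 2)⁻¹, by positivity, ?_⟩
    intro d r hd hr p hp0 hp1 Γ hΓ hadm
    have hS : ∑ i : Fin d → Fin (2 ^ r), (qsqFreq i)⁻¹ ≤ Γ := by
      calc ∑ i : Fin d → Fin (2 ^ r), (qsqFreq i)⁻¹
          ≤ ∑ i : Fin d → Fin (2 ^ r), Γ * p i := Finset.sum_le_sum (fun i _ => hadm i)
        _ = Γ * ∑ i : Fin d → Fin (2 ^ r), p i := by rw [Finset.mul_sum]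
        _ = Γ := by rw [hp1, mul_one]
    have hlow := sum_lower_aux hd hr
    have hlogpow : Real.log ((2:ℝ) ^ r) = r * Real.log 2 := by
      rw [Real.log_pow]
    rw [hlogpow]
    calc (2 * Real.log 2)⁻¹ * ((r:ℝ) * Real.log 2) = (r:ℝ) / 2 := by
          field_simp
      _ ≤ Γ := le_trans hlow hS
  · -- part (ii)
    refine ⟨fun d => 1 + 16 * d * (KK d) ^ (d - 1) / Real.log 2, ?_, ?_⟩
    · intro d
      have h : (0:ℝ) ≤ 16 * d * (KK d) ^ (d - 1) / Real.log 2 := by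
        rcases Nat.eq_zero_or_pos d with hd | hd
        · subst hd; simp
        · have := KK_pos hd
          positivity
      linarith
    · intro d r hd hr cN hnorm i
      set S : ℝ := ∑ i : Fin d → Fin (2 ^ r), (qsqFreq i)⁻¹ with hSdef
      have hcNS : cN * S = 1 := by rw [hSdef, Finset.mul_sum]; exact hnorm
      have hSpos : (0:ℝ) < S := by
        have := sum_lower_aux hd hr
        have hr1 : (1:ℝ) ≤ (r:ℝ) := by exact_mod_cast hr
        rw [hSdef]; linarith
      have hcNpos : (0:ℝ) < cN := by
        rcases lt_trichotomy cN 0 with h | h | h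
        · nlinarith
        · rw [h, zero_mul] at hcNS; norm_num at hcNS
        · exact h
      have hlogpow : Real.log ((2:ℝ) ^ r) = r * Real.log 2 := by rw [Real.log_pow]
      have hrpos : (0:ℝ) < (r:ℝ) := by exact_mod_cast hr
      have hSC : S ≤ (1 + 16 * d * (KK d) ^ (d - 1) / Real.log 2) * Real.log ((2:ℝ) ^ r) := by
        calc S ≤ 16 * d * (KK d) ^ (d - 1) * r := sum_upper_aux hd hr
          _ ≤ 16 * d * (KK d) ^ (d - 1) * r + r * Real.log 2 := by
              nlinarith
          _ = (1 + 16 * d * (KK d) ^ (d - 1) / Real.log 2) * ((r:ℝ) * Real.log 2) := by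
              field_simp; ring
          _ = _ := by rw [hlogpow]
      have h1 : (1:ℝ) ≤ (1 + 16 * d * (KK d) ^ (d - 1) / Real.log 2) * Real.log ((2:ℝ) ^ r) * cN := by
        calc (1:ℝ) = cN * S := hcNS.symm
          _ ≤ cN * ((1 + 16 * d * (KK d) ^ (d - 1) / Real.log 2) * Real.log ((2:ℝ) ^ r)) :=
            mul_le_mul_of_nonneg_left hSC hcNpos.le
          _ = _ := by ring
      calc (qsqFreq i)⁻¹ = 1 * (qsqFreq i)⁻¹ := (one_mul _).symm
        _ ≤ ((1 + 16 * d * (KK d) ^ (d - 1) / Real.log 2) * Real.log ((2:ℝ) ^ r) * cN)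
            * (qsqFreq i)⁻¹ :=
            mul_le_mul_of_nonneg_right h1 (inv_nonneg.2 (qsqFreq_pos i).le)
        _ = ((1 + 16 * d * (KK d) ^ (d - 1) / Real.log 2) * Real.log ((2:ℝ) ^ r))
            * (cN * (qsqFreq i)⁻¹) := by ring


end
end

section
/- Suppose A ∈ ℂ^{m×N} has the ℓ^{2,2}-robust null space property of order s with constants 0 < ρ < 1 and γ > 0. Then for all X, Z ∈ ℂ^{N×M}: ‖Z − X‖_{ℓ^{2,1}} ≤ ((1+ρ)/(1−ρ))·( 2σ_s(X)_{ℓ^{2,1}} + ‖Z‖_{ℓ^{2,1}} − ‖X‖_{ℓ^{2,1}} ) + (2γ/(1−ρ))·√s·‖A(Z−X)‖_{ℓ^{2,2}}, and ‖Z − X‖_{ℓ^{2,2}} ≤ ((3ρ+1)(ρ+1)/(2(1−ρ)))·( 2σ_s(X)_{ℓ^{2,1}} + ‖Z‖_{ℓ^{2,1}} − ‖X‖_{ℓ^{2,1}} )/√s + ((3ρ+5)γ/(2(1−ρ)))·‖A(Z−X)‖_{ℓ^{2,2}}. -/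
open MeasureTheory
open scoped BigOperators ENNReal

noncomputable section


private lemma l2norm_nonneg' {ι : Type*} [Fintype ι] (v : ι → ℂ) : 0 ≤ l2norm v :=
  Real.sqrt_nonneg _

private lemma l2norm_sq' {ι : Type*} [Fintype ι] (v : ι → ℂ) :
    l2norm v ^ 2 = ∑ i, ‖v i‖ ^ 2 :=
  Real.sq_sqrt (by positivity)

private lemma l2norm_eq_norm' {ι : Type*} [Fintype ι] (v : ι → ℂ) :
    l2norm v = ‖(WithLp.equiv 2 (ι → ℂ)).symm v‖ := by
  rw [EuclideanSpace.norm_eq]; rfl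

private lemma l2norm_sub_le' {ι : Type*} [Fintype ι] (u v : ι → ℂ) :
    l2norm (fun j => u j - v j) ≤ l2norm u + l2norm v := by
  rw [l2norm_eq_norm', l2norm_eq_norm', l2norm_eq_norm']
  have h : (WithLp.equiv 2 (ι → ℂ)).symm (fun j => u j - v j)
      = (WithLp.equiv 2 (ι → ℂ)).symm u - (WithLp.equiv 2 (ι → ℂ)).symm v := rfl
  rw [h]; exact norm_sub_le _ _

private lemma exists_topk' {ι : Type*} [Fintype ι] [DecidableEq ι] (a : ι → ℝ) (k : ℕ)
    (hk : k ≤ Fintype.card ι) :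
    ∃ S : Finset ι, S.card = k ∧ ∀ i ∈ S, ∀ j ∉ S, a j ≤ a i := by
  have hne : (Finset.powersetCard k (Finset.univ : Finset ι)).Nonempty := by
    rw [Finset.powersetCard_nonempty]; simpa using hk
  obtain ⟨S, hS, hmax⟩ := Finset.exists_max_image _ (fun T => ∑ i ∈ T, a i) hne
  rw [Finset.mem_powersetCard] at hS
  refine ⟨S, hS.2, ?_⟩
  intro i hi j hj
  by_contra hlt
  push_neg at hlt
  have hji : j ∉ S.erase i := fun h => hj (Finset.mem_of_mem_erase h)
  have hpos : 0 < S.card := Finset.card_pos.mpr ⟨i, hi⟩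
  have hS' : insert j (S.erase i) ∈ Finset.powersetCard k Finset.univ := by
    rw [Finset.mem_powersetCard]
    refine ⟨fun x _ => Finset.mem_univ x, ?_⟩
    rw [Finset.card_insert_of_notMem hji, Finset.card_erase_of_mem hi]
    omega
  have hle := hmax _ hS'
  simp only [Finset.sum_insert hji] at hle
  have herase : ∑ x ∈ S.erase i, a x = (∑ x ∈ S, a x) - a i := by
    have := Finset.add_sum_erase S a hi
    linarith
  rw [herase] at hle
  linarith

private lemma l22norm_rows' {N M : ℕ} (V : Fin N → Fin M → ℂ) :
    l22norm V = Real.sqrt (∑ i, l2norm (V i) ^ 2) := by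
  unfold l22norm
  congr 1
  exact Finset.sum_congr rfl fun i _ => (l2norm_sq' (V i)).symm

private lemma l22norm_mask' {N M : ℕ} (Δ : Finset (Fin N)) (V : Fin N → Fin M → ℂ) :
    l22norm (fun i j => if i ∈ Δ then V i j else 0)
      = Real.sqrt (∑ i ∈ Δ, l2norm (V i) ^ 2) := by
  unfold l22norm
  congr 1
  have h : ∀ i : Fin N, (∑ j, ‖if i ∈ Δ then V i j else 0‖ ^ 2)
      = if i ∈ Δ then l2norm (V i) ^ 2 else 0 := by
    intro i; by_cases h : i ∈ Δ <;> simp [h, l2norm_sq']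
  rw [Finset.sum_congr rfl fun i _ => h i, Finset.sum_ite_mem, Finset.univ_inter]

private lemma l21norm_maskc' {N M : ℕ} (Δ : Finset (Fin N)) (V : Fin N → Fin M → ℂ) :
    l21norm (fun i j => if i ∈ Δ then (0 : ℂ) else V i j)
      = ∑ i ∈ Δᶜ, l2norm (V i) := by
  unfold l21norm
  have h : ∀ i : Fin N, l2norm (fun j => if i ∈ Δ then (0 : ℂ) else V i j)
      = if i ∈ Δᶜ then l2norm (V i) else 0 := by
    intro i; by_cases h : i ∈ Δ <;> simp [h, l2norm]
  rw [Finset.sum_congr rfl fun i _ => h i, Finset.sum_ite_mem, Finset.univ_inter]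

private lemma sqrt_add_le' {x y : ℝ} (hx : 0 ≤ x) (hy : 0 ≤ y) :
    Real.sqrt (x + y) ≤ Real.sqrt x + Real.sqrt y := by
  have h : x + y ≤ (Real.sqrt x + Real.sqrt y) ^ 2 := by
    have hx' := Real.sq_sqrt hx
    have hy' := Real.sq_sqrt hy
    nlinarith [Real.sqrt_nonneg x, Real.sqrt_nonneg y]
  calc Real.sqrt (x + y) ≤ Real.sqrt ((Real.sqrt x + Real.sqrt y) ^ 2) := Real.sqrt_le_sqrt h
    _ = Real.sqrt x + Real.sqrt y := Real.sqrt_sq (by positivity)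

private lemma sum_le_sqrt_card_mul' {ι : Type*} (Δ : Finset ι) (a : ι → ℝ)
    (ha : ∀ i, 0 ≤ a i) :
    ∑ i ∈ Δ, a i ≤ Real.sqrt Δ.card * Real.sqrt (∑ i ∈ Δ, a i ^ 2) := by
  have h1 : (∑ i ∈ Δ, a i) ^ 2 ≤ Δ.card * ∑ i ∈ Δ, a i ^ 2 := sq_sum_le_card_mul_sum_sq
  have h2 : (0:ℝ) ≤ ∑ i ∈ Δ, a i := Finset.sum_nonneg fun i _ => ha i
  calc ∑ i ∈ Δ, a i = Real.sqrt ((∑ i ∈ Δ, a i) ^ 2) := (Real.sqrt_sq h2).symm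
    _ ≤ Real.sqrt (Δ.card * ∑ i ∈ Δ, a i ^ 2) := Real.sqrt_le_sqrt h1
    _ = Real.sqrt Δ.card * Real.sqrt (∑ i ∈ Δ, a i ^ 2) := Real.sqrt_mul (by positivity) _


private lemma sInf_wrap' {S : Set ℝ} (hne : S.Nonempty) {c L B : ℝ} (hc : 0 < c)
    (h : ∀ u ∈ S, L ≤ c * (2 * u) + B) : L ≤ c * (2 * sInf S) + B := by
  have h2 : (L - B) / (2 * c) ≤ sInf S := by
    apply le_csInf hne
    intro u hu
    rw [div_le_iff₀ (by positivity)]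
    linarith [h u hu]
  rw [div_le_iff₀ (by positivity)] at h2
  linarith

set_option maxHeartbeats 1000000 in
private lemma core_bounds {N s : ℕ} {ρ K t : ℝ} (hs : 1 ≤ s) (hρ0 : 0 < ρ) (hρ1 : ρ < 1)
    (hK : 0 ≤ K) (a b c : Fin N → ℝ)
    (ha : ∀ i, 0 ≤ a i)
    (htri1 : ∀ i, a i ≤ c i + b i) (htri2 : ∀ i, b i ≤ c i + a i)
    (hrnsp : ∀ Δ : Finset (Fin N), Δ.card ≤ s →
      Real.sqrt (∑ i ∈ Δ, a i ^ 2) ≤ ρ / Real.sqrt s * (∑ i ∈ Δᶜ, a i) + K)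
    (Δ₀ : Finset (Fin N)) (hΔ₀ : Δ₀.card ≤ s) (ht : ∑ i ∈ Δ₀ᶜ, b i ≤ t) :
    (∑ i, a i) ≤ (1 + ρ) / (1 - ρ) * (2 * t + ∑ i, c i - ∑ i, b i)
        + 2 / (1 - ρ) * Real.sqrt s * K ∧
    Real.sqrt (∑ i, a i ^ 2) ≤ (3 * ρ + 1) * (ρ + 1) / (2 * (1 - ρ)) *
        ((2 * t + ∑ i, c i - ∑ i, b i) / Real.sqrt s)
        + (3 * ρ + 5) / (2 * (1 - ρ)) * K := by
  classical
  set sq := Real.sqrt s with hsqdef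
  have hscast : (1:ℝ) ≤ (s:ℝ) := by exact_mod_cast hs
  have hsq1 : 1 ≤ sq := by
    calc (1:ℝ) = Real.sqrt 1 := by simp
      _ ≤ sq := Real.sqrt_le_sqrt hscast
  have hsq0 : 0 < sq := lt_of_lt_of_le one_pos hsq1
  have hsqne : sq ≠ 0 := ne_of_gt hsq0
  have hsq2 : sq ^ 2 = (s:ℝ) := Real.sq_sqrt (Nat.cast_nonneg s)
  have h1ρ : 0 < 1 - ρ := by linarith
  -- (A): Cauchy-Schwarz + rNSP
  have hAΔ : ∀ Δ : Finset (Fin N), Δ.card ≤ s →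
      ∑ i ∈ Δ, a i ≤ ρ * (∑ i ∈ Δᶜ, a i) + sq * K := by
    intro Δ hΔ
    have h1 := hrnsp Δ hΔ
    have h2 : ∑ i ∈ Δ, a i ≤ Real.sqrt Δ.card * Real.sqrt (∑ i ∈ Δ, a i ^ 2) :=
      sum_le_sqrt_card_mul' Δ a ha
    have h3 : Real.sqrt Δ.card ≤ sq := Real.sqrt_le_sqrt (by exact_mod_cast hΔ)
    have h4 : (0:ℝ) ≤ Real.sqrt (∑ i ∈ Δ, a i ^ 2) := Real.sqrt_nonneg _
    have h5 : ∑ i ∈ Δ, a i ≤ sq * (ρ / sq * (∑ i ∈ Δᶜ, a i) + K) := by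
      calc ∑ i ∈ Δ, a i ≤ Real.sqrt Δ.card * Real.sqrt (∑ i ∈ Δ, a i ^ 2) := h2
        _ ≤ sq * Real.sqrt (∑ i ∈ Δ, a i ^ 2) := mul_le_mul_of_nonneg_right h3 h4
        _ ≤ sq * (ρ / sq * (∑ i ∈ Δᶜ, a i) + K) :=
            mul_le_mul_of_nonneg_left h1 (le_of_lt hsq0)
    have hcancel : sq * (ρ / sq * (∑ i ∈ Δᶜ, a i) + K)
        = ρ * (∑ i ∈ Δᶜ, a i) + sq * K := by
      field_simp
    rw [hcancel] at h5
    exact h5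
  -- (B): triangle inequality count
  have hBΔ : ∀ Δ : Finset (Fin N),
      ∑ i ∈ Δᶜ, a i ≤ (∑ i, c i - ∑ i, b i) + (∑ i ∈ Δ, a i) + 2 * ∑ i ∈ Δᶜ, b i := by
    intro Δ
    have h1 : ∑ i ∈ Δᶜ, a i ≤ ∑ i ∈ Δᶜ, (c i + b i) := Finset.sum_le_sum fun i _ => htri1 i
    have h2 : ∑ i ∈ Δ, b i ≤ ∑ i ∈ Δ, (c i + a i) := Finset.sum_le_sum fun i _ => htri2 i
    have h3 : ∑ i ∈ Δ, c i + ∑ i ∈ Δᶜ, c i = ∑ i, c i := Finset.sum_add_sum_compl Δ c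
    have h4 : ∑ i ∈ Δ, b i + ∑ i ∈ Δᶜ, b i = ∑ i, b i := Finset.sum_add_sum_compl Δ b
    rw [Finset.sum_add_distrib] at h1 h2
    linarith
  set D := 2 * t + ∑ i, c i - ∑ i, b i with hD
  set T := ∑ i, a i with hT
  have hsplit : ∑ i ∈ Δ₀, a i + ∑ i ∈ Δ₀ᶜ, a i = T := Finset.sum_add_sum_compl Δ₀ a
  have hC : (1 - ρ) * (∑ i ∈ Δ₀ᶜ, a i) ≤ D + sq * K := by
    have h1 := hAΔ Δ₀ hΔ₀
    have h2 := hBΔ Δ₀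
    have h3 : ∑ i ∈ Δ₀ᶜ, a i ≤ (∑ i, c i - ∑ i, b i) + (ρ * (∑ i ∈ Δ₀ᶜ, a i) + sq * K)
        + 2 * t := by
      have h4 : (2:ℝ) * ∑ i ∈ Δ₀ᶜ, b i ≤ 2 * t := by linarith
      linarith
    rw [hD]; linarith
  have hTc0 : (0:ℝ) ≤ ∑ i ∈ Δ₀ᶜ, a i := Finset.sum_nonneg fun i _ => ha i
  have hnn : 0 ≤ D + sq * K := le_trans (mul_nonneg h1ρ.le hTc0) hC
  have hTle : T ≤ (1 + ρ) * (∑ i ∈ Δ₀ᶜ, a i) + sq * K := by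
    have h1 := hAΔ Δ₀ hΔ₀
    linarith
  have h1m : (1 - ρ) * T ≤ (1 + ρ) * D + 2 * sq * K := by
    nlinarith [mul_le_mul_of_nonneg_left hC (by linarith : (0:ℝ) ≤ 1 + ρ),
      mul_le_mul_of_nonneg_left hTle h1ρ.le, mul_nonneg hsq0.le hK]
  have hbound1 : T ≤ (1 + ρ) / (1 - ρ) * D + 2 / (1 - ρ) * sq * K := by
    have heq : (1 - ρ) * ((1 + ρ) / (1 - ρ) * D + 2 / (1 - ρ) * sq * K)
        = (1 + ρ) * D + 2 * sq * K := by field_simp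
    have h := h1m.trans_eq heq.symm
    exact (mul_le_mul_iff_right₀ h1ρ).mp h
  refine ⟨hbound1, ?_⟩
  -- bound 2
  obtain ⟨S, hScard, hStop⟩ := exists_topk' a (min s N) (by simp)
  have hScard_le : S.card ≤ s := by rw [hScard]; exact min_le_left _ _
  have hsplit2 : ∑ i ∈ S, a i ^ 2 + ∑ i ∈ Sᶜ, a i ^ 2 = ∑ i, a i ^ 2 :=
    Finset.sum_add_sum_compl S _
  have hTnn : (0:ℝ) ≤ T := Finset.sum_nonneg fun i _ => ha i
  have hTsplit : ∑ i ∈ S, a i + ∑ i ∈ Sᶜ, a i = T := Finset.sum_add_sum_compl S a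
  have hSnn : (0:ℝ) ≤ ∑ i ∈ S, a i := Finset.sum_nonneg fun i _ => ha i
  have hScnn : (0:ℝ) ≤ ∑ i ∈ Sᶜ, a i := Finset.sum_nonneg fun i _ => ha i
  have htail : Real.sqrt (∑ i ∈ Sᶜ, a i ^ 2) ≤ T / (2 * sq) := by
    by_cases hSc : Sᶜ = ∅
    · rw [hSc]
      simp only [Finset.sum_empty, Real.sqrt_zero]
      exact div_nonneg hTnn (by positivity)
    · have hne : Sᶜ.Nonempty := Finset.nonempty_iff_ne_empty.mpr hSc
      have hcard : S.card = s := by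
        have h0 : 0 < Sᶜ.card := Finset.card_pos.mpr hne
        rw [Finset.card_compl, Fintype.card_fin] at h0
        rw [hScard]
        omega
      have hkey : ∀ j ∈ Sᶜ, (s:ℝ) * a j ≤ ∑ i ∈ S, a i := by
        intro j hj
        rw [Finset.mem_compl] at hj
        calc (s:ℝ) * a j = ∑ _i ∈ S, a j := by
              rw [Finset.sum_const, hcard, nsmul_eq_mul]
          _ ≤ ∑ i ∈ S, a i := Finset.sum_le_sum fun i hi => hStop i hi j hj
      have hsum2 : (s:ℝ) * ∑ i ∈ Sᶜ, a i ^ 2 ≤ (∑ i ∈ S, a i) * (∑ i ∈ Sᶜ, a i) := by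
        calc (s:ℝ) * ∑ i ∈ Sᶜ, a i ^ 2 = ∑ j ∈ Sᶜ, (s:ℝ) * a j ^ 2 := Finset.mul_sum _ _ _
          _ ≤ ∑ j ∈ Sᶜ, (∑ i ∈ S, a i) * a j := by
              refine Finset.sum_le_sum fun j hj => ?_
              nlinarith [mul_le_mul_of_nonneg_right (hkey j hj) (ha j), ha j]
          _ = (∑ i ∈ S, a i) * (∑ i ∈ Sᶜ, a i) := (Finset.mul_sum _ _ _).symm
      have h4s : (0:ℝ) < 4 * s := by positivity
      have hfinal2 : ∑ i ∈ Sᶜ, a i ^ 2 ≤ (T / (2 * sq)) ^ 2 := by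
        have h2sq : (2 * sq) ^ 2 = 4 * (s:ℝ) := by rw [mul_pow, hsq2]; norm_num
        rw [div_pow, h2sq, le_div_iff₀ h4s]
        have h5 : (∑ i ∈ Sᶜ, a i ^ 2) * (4 * (s:ℝ)) ≤
            ((∑ i ∈ S, a i) + (∑ i ∈ Sᶜ, a i)) ^ 2 := by
          nlinarith [hsum2, sq_nonneg ((∑ i ∈ S, a i) - (∑ i ∈ Sᶜ, a i))]
        rw [hTsplit] at h5
        exact h5
      calc Real.sqrt (∑ i ∈ Sᶜ, a i ^ 2) ≤ Real.sqrt ((T / (2 * sq)) ^ 2) :=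
            Real.sqrt_le_sqrt hfinal2
        _ = T / (2 * sq) := Real.sqrt_sq (div_nonneg hTnn (by positivity))
  have hhead : Real.sqrt (∑ i ∈ S, a i ^ 2) ≤ ρ / sq * T + K := by
    have h1 := hrnsp S hScard_le
    have h2 : ∑ i ∈ Sᶜ, a i ≤ T := by linarith
    have h3 : (0:ℝ) ≤ ρ / sq := by positivity
    calc Real.sqrt (∑ i ∈ S, a i ^ 2) ≤ ρ / sq * (∑ i ∈ Sᶜ, a i) + K := h1
      _ ≤ ρ / sq * T + K := by nlinarith [mul_le_mul_of_nonneg_left h2 h3]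
  have hl22 : Real.sqrt (∑ i, a i ^ 2) ≤ (2 * ρ + 1) / (2 * sq) * T + K := by
    have h0 : Real.sqrt (∑ i, a i ^ 2) ≤
        Real.sqrt (∑ i ∈ S, a i ^ 2) + Real.sqrt (∑ i ∈ Sᶜ, a i ^ 2) := by
      rw [← hsplit2]
      exact sqrt_add_le' (by positivity) (by positivity)
    have heq : ρ / sq * T + K + T / (2 * sq) = (2 * ρ + 1) / (2 * sq) * T + K := by
      field_simp
      ring
    linarith [hhead, htail, h0, heq]
  -- combine
  have hstep : (2 * ρ + 1) / (2 * sq) * T ≤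
      (2 * ρ + 1) / (2 * sq) * ((1 + ρ) / (1 - ρ) * D + 2 / (1 - ρ) * sq * K) :=
    mul_le_mul_of_nonneg_left hbound1 (by positivity)
  have heq1 : (2 * ρ + 1) / (2 * sq) * ((1 + ρ) / (1 - ρ) * D + 2 / (1 - ρ) * sq * K)
      = (2 * ρ + 1) * (1 + ρ) / (2 * (1 - ρ)) * (D / sq) + (2 * ρ + 1) / (1 - ρ) * K := by
    field_simp
  have hnum : 0 ≤ ρ * D + sq * K := by nlinarith [hnn, mul_nonneg hsq0.le hK]
  have hslack : 0 ≤ ρ * (D / sq) + K := by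
    have he : ρ * (D / sq) + K = (ρ * D + sq * K) / sq := by field_simp
    rw [he]
    exact div_nonneg hnum hsq0.le
  have hge : (0:ℝ) ≤ (ρ + 1) / (2 * (1 - ρ)) := by positivity
  have hslack2 : 0 ≤ (ρ + 1) / (2 * (1 - ρ)) * (ρ * (D / sq) + K) := mul_nonneg hge hslack
  have heq2 : (3 * ρ + 1) * (ρ + 1) / (2 * (1 - ρ)) * (D / sq)
        + (3 * ρ + 5) / (2 * (1 - ρ)) * K
      = (2 * ρ + 1) * (1 + ρ) / (2 * (1 - ρ)) * (D / sq) + (2 * ρ + 1) / (1 - ρ) * K + K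
        + (ρ + 1) / (2 * (1 - ρ)) * (ρ * (D / sq) + K) := by
    field_simp
    ring
  linarith [hl22, hstep, heq1, heq2, hslack2]

/-- **Lemma (`ℓ^{2,2}`-rNSP implies `ℓ^{2,1}` and `ℓ^{2,2}` distance bounds).** -/
theorem rnsp22_distance_bounds :
    ∀ (m N M s : ℕ) (ρ γ : ℝ), 1 ≤ s → 0 < ρ → ρ < 1 → 0 < γ →
      ∀ A : Matrix (Fin m) (Fin N) ℂ, RNSP22 M A s ρ γ →
        ∀ X Z : Fin N → Fin M → ℂ,
          l21norm (fun i j => Z i j - X i j) ≤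
            (1 + ρ) / (1 - ρ) * (2 * sigma21 s X + l21norm Z - l21norm X) +
              2 * γ / (1 - ρ) * Real.sqrt s *
                l22norm (fun k j => ∑ i, A k i * (Z i j - X i j)) ∧
          l22norm (fun i j => Z i j - X i j) ≤
            (3 * ρ + 1) * (ρ + 1) / (2 * (1 - ρ)) *
                ((2 * sigma21 s X + l21norm Z - l21norm X) / Real.sqrt s) +
              (3 * ρ + 5) * γ / (2 * (1 - ρ)) *
                l22norm (fun k j => ∑ i, A k i * (Z i j - X i j)) := by
  intro m N M s ρ γ hs hρ0 hρ1 hγ A hA X Z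
  classical
  have h1ρ : (0:ℝ) < 1 - ρ := by linarith
  have hE0 : (0:ℝ) ≤ l22norm (fun k j => ∑ i, A k i * (Z i j - X i j)) := Real.sqrt_nonneg _
  have hK : (0:ℝ) ≤ γ * l22norm (fun k j => ∑ i, A k i * (Z i j - X i j)) :=
    mul_nonneg hγ.le hE0
  have ha : ∀ i, (0:ℝ) ≤ l2norm (fun j => Z i j - X i j) := fun i => l2norm_nonneg' _
  have htri1 : ∀ i, l2norm (fun j => Z i j - X i j) ≤ l2norm (Z i) + l2norm (X i) :=
    fun i => l2norm_sub_le' (Z i) (X i)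
  have htri2 : ∀ i, l2norm (X i) ≤ l2norm (Z i) + l2norm (fun j => Z i j - X i j) := by
    intro i
    have h := l2norm_sub_le' (Z i) (fun j => Z i j - X i j)
    have he : (fun j => Z i j - (Z i j - X i j)) = X i := by funext j; ring
    rw [he] at h
    exact h
  have hrnsp : ∀ Δ : Finset (Fin N), Δ.card ≤ s →
      Real.sqrt (∑ i ∈ Δ, l2norm (fun j => Z i j - X i j) ^ 2) ≤
        ρ / Real.sqrt s * (∑ i ∈ Δᶜ, l2norm (fun j => Z i j - X i j)) +
          γ * l22norm (fun k j => ∑ i, A k i * (Z i j - X i j)) := by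
    intro Δ hΔ
    have h := hA (fun i j => Z i j - X i j) Δ hΔ
    rwa [l22norm_mask', l21norm_maskc'] at h
  have e0 : l21norm (fun i j => Z i j - X i j)
      = ∑ i, l2norm (fun j => Z i j - X i j) := rfl
  have e1 : l21norm Z = ∑ i, l2norm (Z i) := rfl
  have e2 : l21norm X = ∑ i, l2norm (X i) := rfl
  have e22 : l22norm (fun i j => Z i j - X i j)
      = Real.sqrt (∑ i, l2norm (fun j => Z i j - X i j) ^ 2) := l22norm_rows' _
  have main : ∀ Z₀ : Fin N → Fin M → ℂ, {i | Z₀ i ≠ 0}.ncard ≤ s →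
      (l21norm (fun i j => Z i j - X i j) ≤
        (1 + ρ) / (1 - ρ) *
            (2 * l21norm (fun i j => X i j - Z₀ i j) + l21norm Z - l21norm X) +
          2 * γ / (1 - ρ) * Real.sqrt s *
            l22norm (fun k j => ∑ i, A k i * (Z i j - X i j))) ∧
      (l22norm (fun i j => Z i j - X i j) ≤
        (3 * ρ + 1) * (ρ + 1) / (2 * (1 - ρ)) *
            ((2 * l21norm (fun i j => X i j - Z₀ i j) + l21norm Z - l21norm X) /
              Real.sqrt s) +
          (3 * ρ + 5) * γ / (2 * (1 - ρ)) *
            l22norm (fun k j => ∑ i, A k i * (Z i j - X i j))) := by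
    intro Z₀ hZ₀
    have hfin : {i | Z₀ i ≠ 0}.Finite := Set.toFinite _
    have hΔ₀card : hfin.toFinset.card ≤ s := by
      rw [← Set.ncard_eq_toFinset_card _ hfin]; exact hZ₀
    have hmem : ∀ i, i ∉ hfin.toFinset → Z₀ i = 0 := by
      intro i hi
      by_contra h
      exact hi (hfin.mem_toFinset.mpr h)
    have ht : ∑ i ∈ hfin.toFinsetᶜ, l2norm (X i) ≤
        l21norm (fun i j => X i j - Z₀ i j) := by
      calc ∑ i ∈ hfin.toFinsetᶜ, l2norm (X i)
          = ∑ i ∈ hfin.toFinsetᶜ, l2norm (fun j => X i j - Z₀ i j) := by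
            refine Finset.sum_congr rfl fun i hi => ?_
            have h0 : Z₀ i = 0 := hmem i (Finset.mem_compl.mp hi)
            congr 1
            funext j
            simp [h0]
        _ ≤ ∑ i : Fin N, l2norm (fun j => X i j - Z₀ i j) :=
            Finset.sum_le_sum_of_subset_of_nonneg (Finset.subset_univ _)
              (fun i _ _ => l2norm_nonneg' _)
        _ = l21norm (fun i j => X i j - Z₀ i j) := rfl
    obtain ⟨hc1, hc2⟩ := core_bounds hs hρ0 hρ1 hK
      (fun i => l2norm (fun j => Z i j - X i j)) (fun i => l2norm (X i))
      (fun i => l2norm (Z i)) ha htri1 htri2 hrnsp hfin.toFinset hΔ₀card ht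
    constructor
    · rw [e0, e1, e2]
      refine hc1.trans (le_of_eq ?_)
      ring
    · rw [e22, e1, e2]
      refine hc2.trans (le_of_eq ?_)
      ring
  have hne : {u | ∃ Z₀ : Fin N → Fin M → ℂ, {i | Z₀ i ≠ 0}.ncard ≤ s ∧
      u = l21norm (fun i j => X i j - Z₀ i j)}.Nonempty := by
    refine ⟨l21norm (fun i j => X i j - (0 : Fin N → Fin M → ℂ) i j), 0, ?_, rfl⟩
    simp
  have hσ : sigma21 s X = sInf {u | ∃ Z₀ : Fin N → Fin M → ℂ, {i | Z₀ i ≠ 0}.ncard ≤ s ∧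
      u = l21norm (fun i j => X i j - Z₀ i j)} := rfl
  constructor
  · rw [hσ]
    have hc : (0:ℝ) < (1 + ρ) / (1 - ρ) := div_pos (by linarith) h1ρ
    have hw := sInf_wrap' hne hc (L := l21norm (fun i j => Z i j - X i j))
      (B := (1 + ρ) / (1 - ρ) * (l21norm Z - l21norm X) +
        2 * γ / (1 - ρ) * Real.sqrt s * l22norm (fun k j => ∑ i, A k i * (Z i j - X i j)))
      (fun u hu => by
        obtain ⟨Z₀, hZ₀, hu⟩ := hu
        have h1 := (main Z₀ hZ₀).1
        rw [hu]
        linarith [h1])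
    linarith [hw]
  · rw [hσ]
    have hsq0 : (0:ℝ) < Real.sqrt s := by
      have : (0:ℝ) < (s:ℝ) := by exact_mod_cast hs
      exact Real.sqrt_pos.mpr this
    have hc : (0:ℝ) < (3 * ρ + 1) * (ρ + 1) / (2 * (1 - ρ)) / Real.sqrt s := by
      apply div_pos _ hsq0
      apply div_pos _ (by linarith)
      nlinarith
    have hw := sInf_wrap' hne hc (L := l22norm (fun i j => Z i j - X i j))
      (B := (3 * ρ + 1) * (ρ + 1) / (2 * (1 - ρ)) *
          ((l21norm Z - l21norm X) / Real.sqrt s) +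
        (3 * ρ + 5) * γ / (2 * (1 - ρ)) *
          l22norm (fun k j => ∑ i, A k i * (Z i j - X i j)))
      (fun u hu => by
        obtain ⟨Z₀, hZ₀, hu⟩ := hu
        have h2 := (main Z₀ hZ₀).2
        rw [hu]
        have hexp : (3 * ρ + 1) * (ρ + 1) / (2 * (1 - ρ)) *
            ((2 * l21norm (fun i j => X i j - Z₀ i j) + l21norm Z - l21norm X) /
              Real.sqrt s)
            = (3 * ρ + 1) * (ρ + 1) / (2 * (1 - ρ)) / Real.sqrt s *
                (2 * l21norm (fun i j => X i j - Z₀ i j)) +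
              (3 * ρ + 1) * (ρ + 1) / (2 * (1 - ρ)) *
                ((l21norm Z - l21norm X) / Real.sqrt s) := by
          field_simp
          ring
        linarith [h2, hexp])
    have hexp2 : (3 * ρ + 1) * (ρ + 1) / (2 * (1 - ρ)) *
        ((2 * sInf {u | ∃ Z₀ : Fin N → Fin M → ℂ, {i | Z₀ i ≠ 0}.ncard ≤ s ∧
            u = l21norm (fun i j => X i j - Z₀ i j)} + l21norm Z - l21norm X) /
          Real.sqrt s)
        = (3 * ρ + 1) * (ρ + 1) / (2 * (1 - ρ)) / Real.sqrt s *
            (2 * sInf {u | ∃ Z₀ : Fin N → Fin M → ℂ, {i | Z₀ i ≠ 0}.ncard ≤ s ∧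
              u = l21norm (fun i j => X i j - Z₀ i j)}) +
          (3 * ρ + 1) * (ρ + 1) / (2 * (1 - ρ)) *
            ((l21norm Z - l21norm X) / Real.sqrt s) := by
      field_simp
      ring
    linarith [hw, hexp2]

end
end

section
/- Let N = 2^r, let F be the one-dimensional DFT matrix and {ψ^{(e)}_{j,n}} the one-dimensional discrete Haar wavelet basis of ℂ^N. There exists a universal constant C > 0 such that for all j = 0,…,r−1, n = 0,…,2^j−1, e ∈ {0,1} and all ω ∈ {−N/2+1,…,N/2}: (1/√N)·|(F ψ^{(e)}_{j,n})_{ϱ^{-1}(ω)}| ≤ C·(1/√(ω̄))·min{ (2^j/ω̄)^{1/2}, (ω̄/2^j)^{1/2+e} }, where ω̄ = max{1,|ω|}. In particular, (1/√N)·|(F ψ^{(e)}_{j,n})_{ϱ^{-1}(ω)}| ≤ C·2^{j/2}/max{ω̄, 2^j}. -/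
open MeasureTheory
open scoped BigOperators ENNReal

noncomputable section

lemma norm_one_sub_exp_mul_I (x : ℝ) :
    ‖1 - Complex.exp ((x : ℂ) * Complex.I)‖ = 2 * |Real.sin (x / 2)| := by
  rw [Complex.exp_mul_I]
  have h1 : (1 : ℂ) - (Complex.cos x + Complex.sin x * Complex.I)
      = ((1 - Real.cos x : ℝ) : ℂ) + ((-Real.sin x : ℝ) : ℂ) * Complex.I := by
    rw [← Complex.ofReal_cos, ← Complex.ofReal_sin]; push_cast; ring
  rw [h1, Complex.norm_def, Complex.normSq_add_mul_I]
  have h2x : 2 * (x / 2) = x := by ring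
  have hs := Real.sin_sq_eq_half_sub (x / 2)
  rw [h2x] at hs
  have h2 : (1 - Real.cos x) ^ 2 + (-Real.sin x) ^ 2 = (2 * |Real.sin (x / 2)|) ^ 2 := by
    have hpyth : Real.sin x ^ 2 + Real.cos x ^ 2 = 1 := Real.sin_sq_add_cos_sq x
    rw [mul_pow, sq_abs]
    nlinarith
  rw [h2, Real.sqrt_sq (by positivity)]

lemma norm_exp_real_mul_I_pow (θ : ℝ) (m : ℕ) :
    ‖Complex.exp ((θ : ℂ) * Complex.I) ^ m‖ = 1 := by
  rw [← Complex.exp_nat_mul]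
  have h : (m : ℂ) * ((θ : ℂ) * Complex.I) = (((m : ℝ) * θ : ℝ) : ℂ) * Complex.I := by
    push_cast; ring
  rw [h, Complex.norm_exp_ofReal_mul_I]

lemma exp_real_mul_I_pow (θ : ℝ) (m : ℕ) :
    Complex.exp ((θ : ℂ) * Complex.I) ^ m
      = Complex.exp ((((m : ℝ) * θ : ℝ) : ℂ) * Complex.I) := by
  rw [← Complex.exp_nat_mul]
  congr 1
  push_cast; ring

lemma haar_sum_eq (r j n : ℕ) (hj : j < r) (hn : n < 2 ^ j) (e : Bool) (c : ℂ) :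
    ∑ t : Fin (2 ^ r), Complex.exp (c * (t.val : ℂ)) * haar1 r j n e t =
      (((2 : ℝ) ^ (((j : ℝ) - (r : ℝ)) / 2) : ℝ) : ℂ) * Complex.exp c ^ (n * 2 ^ (r - j)) *
        (∑ s ∈ Finset.range (2 ^ (r - j - 1)), Complex.exp c ^ s) *
        (1 + (if e then (-1 : ℂ) else 1) * Complex.exp c ^ (2 ^ (r - j - 1))) := by
  set A : ℂ := (((2 : ℝ) ^ (((j : ℝ) - (r : ℝ)) / 2) : ℝ) : ℂ) with hA
  set ε : ℂ := (if e then (-1 : ℂ) else 1) with hε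
  set q : ℂ := Complex.exp c with hq
  set H : ℕ := 2 ^ (r - j - 1) with hH
  set t0 : ℕ := n * 2 ^ (r - j) with ht0
  set ψ : ℕ → ℂ := fun t =>
    if t0 ≤ t ∧ t < t0 + H then A
    else if t0 + H ≤ t ∧ t < (n + 1) * 2 ^ (r - j) then ε * A else 0 with hψ
  set g : ℕ → ℂ := fun t => Complex.exp (c * (t : ℂ)) * ψ t with hg
  have hHH : 2 ^ (r - j) = H + H := by
    have h2 : 2 ^ (r - j) = 2 ^ (r - j - 1) * 2 := by rw [← pow_succ]; congr 1; omega
    omega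
  have hupper : (n + 1) * 2 ^ (r - j) = t0 + (H + H) := by
    rw [ht0, ← hHH]; ring
  have hbound : t0 + (H + H) ≤ 2 ^ r := by
    rw [← hupper]
    calc (n + 1) * 2 ^ (r - j) ≤ 2 ^ j * 2 ^ (r - j) := by
          exact Nat.mul_le_mul_right _ hn
      _ = 2 ^ r := by rw [← pow_add]; congr 1; omega
  have hqpow : ∀ m : ℕ, Complex.exp (c * (m : ℂ)) = q ^ m := fun m => by
    rw [mul_comm, Complex.exp_nat_mul]
  have step0 : ∑ t : Fin (2 ^ r), Complex.exp (c * (t.val : ℂ)) * haar1 r j n e t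
      = ∑ t ∈ Finset.range (2 ^ r), g t := by
    rw [← Fin.sum_univ_eq_sum_range g (2 ^ r)]
    rfl
  have step1 : ∑ t ∈ Finset.range (2 ^ r), g t = ∑ t ∈ Finset.Ico t0 (t0 + (H + H)), g t := by
    rw [Finset.range_eq_Ico]
    refine (Finset.sum_subset (Finset.Ico_subset_Ico (Nat.zero_le _) hbound) ?_).symm
    intro x hx hx'
    simp only [Finset.mem_Ico] at hx hx'
    have hψ0 : ψ x = 0 := by
      simp only [hψ]
      split_ifs with h1 h2
      · exfalso; omega
      · exfalso; omega
      · rfl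
    simp only [hg, hψ0, mul_zero]
  have step2 : ∑ t ∈ Finset.Ico t0 (t0 + (H + H)), g t
      = ∑ s ∈ Finset.range (H + H), g (t0 + s) := by
    rw [Finset.sum_Ico_eq_sum_range, Nat.add_sub_cancel_left]
  have step3 : ∑ s ∈ Finset.range (H + H), g (t0 + s)
      = ∑ s ∈ Finset.range H, g (t0 + s) + ∑ s ∈ Finset.range H, g (t0 + (H + s)) := by
    rw [Finset.sum_range_add]
  have e1 : ∑ s ∈ Finset.range H, g (t0 + s) = (A * q ^ t0) * ∑ s ∈ Finset.range H, q ^ s := by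
    rw [Finset.mul_sum]
    refine Finset.sum_congr rfl fun s hs => ?_
    simp only [Finset.mem_range] at hs
    simp only [hg, hψ]
    rw [if_pos ⟨by omega, by omega⟩, hqpow, pow_add]; ring
  have e2 : ∑ s ∈ Finset.range H, g (t0 + (H + s))
      = (A * q ^ t0 * (ε * q ^ H)) * ∑ s ∈ Finset.range H, q ^ s := by
    rw [Finset.mul_sum]
    refine Finset.sum_congr rfl fun s hs => ?_
    simp only [Finset.mem_range] at hs
    simp only [hg, hψ]
    rw [if_neg (by omega), if_pos ⟨by omega, by omega⟩, hqpow, pow_add, pow_add]; ring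
  rw [step0, step1, step2, step3, e1, e2]
  ring

set_option maxHeartbeats 1000000 in
/-- **Lemma (Fourier transform of a discrete Haar wavelet).**
For all `j < r`, `n < 2^j`, `e ∈ {0,1}` and every frequency `ω = ϱ(i)`,
`(1/√N)|(F ψ^{(e)}_{j,n})_{ϱ⁻¹(ω)}| ≤ C ω̄^{-1/2} min((2^j/ω̄)^{1/2}, (ω̄/2^j)^{1/2+e})`,
and in particular it is `≤ C·2^{j/2}/max(ω̄, 2^j)`. -/
theorem fourier_haar_entry_bound :
    ∃ C : ℝ, 0 < C ∧
      ∀ (r j n : ℕ) (e : Bool), 1 ≤ r → j < r → n < 2 ^ j →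
        ∀ i : Fin (2 ^ r),
          (Real.sqrt (2 ^ r))⁻¹ * ‖(dft (2 ^ r)).mulVec (haar1 r j n e) i‖ ≤
              C * (Real.sqrt (obar (varrho (2 ^ r) i)))⁻¹ *
                min (((2 ^ j : ℝ) / obar (varrho (2 ^ r) i)) ^ ((1 : ℝ) / 2))
                  ((obar (varrho (2 ^ r) i) / (2 ^ j : ℝ)) ^
                    ((1 : ℝ) / 2 + (if e then 1 else 0))) ∧
            (Real.sqrt (2 ^ r))⁻¹ * ‖(dft (2 ^ r)).mulVec (haar1 r j n e) i‖ ≤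
              C * (2 : ℝ) ^ ((j : ℝ) / 2) / max (obar (varrho (2 ^ r) i)) ((2 : ℝ) ^ j) := by
  refine ⟨4, by norm_num, ?_⟩
  intro r j n e hr hj hn i
  obtain ⟨k, rfl⟩ : ∃ k, r = j + k + 1 := ⟨r - j - 1, by omega⟩
  have hjk : j < j + k + 1 := by omega
  set ω : ℤ := varrho (2 ^ (j + k + 1)) i with hωdef
  set W : ℝ := obar ω with hWdef
  have hW1 : (1 : ℝ) ≤ W := le_max_left _ _
  have hWpos : (0 : ℝ) < W := lt_of_lt_of_le one_pos hW1
  have hωW : |(ω : ℝ)| ≤ W := le_max_right _ _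
  have hNpos : (0 : ℝ) < (2 : ℝ) ^ (j + k + 1) := by positivity
  have hTpos : (0 : ℝ) < (2 : ℝ) ^ j := by positivity
  have hωle : |(ω : ℝ)| ≤ (2 : ℝ) ^ (j + k + 1) / 2 := by
    have h1 : |ω| ≤ ((2 ^ (j + k) : ℕ) : ℤ) := by
      rw [hωdef]
      unfold varrho
      rw [abs_mul, abs_pow, abs_neg, abs_one, one_pow, one_mul, Int.abs_natCast]
      have hi : i.val < 2 ^ (j + k + 1) := i.isLt
      have h2 : 2 ^ (j + k + 1) = 2 * 2 ^ (j + k) := by rw [pow_succ]; ring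
      have h3 : (i.val + 1) / 2 ≤ 2 ^ (j + k) := by omega
      exact_mod_cast h3
    calc |(ω : ℝ)| = ((|ω| : ℤ) : ℝ) := (Int.cast_abs).symm
      _ ≤ ((2 ^ (j + k) : ℕ) : ℝ) := by exact_mod_cast h1
      _ = (2 : ℝ) ^ (j + k + 1) / 2 := by push_cast; rw [pow_succ]; ring
  set θ : ℝ := -(2 * Real.pi * (ω : ℝ)) / (2 : ℝ) ^ (j + k + 1) with hθdef
  have hθabs : |θ| = 2 * Real.pi * |(ω : ℝ)| / (2 : ℝ) ^ (j + k + 1) := by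
    rw [hθdef, abs_div, abs_neg, abs_mul, abs_mul, abs_of_nonneg Real.pi_pos.le,
      abs_of_nonneg hNpos.le, abs_two]
  have hθπ : |θ| ≤ Real.pi := by
    rw [hθabs, div_le_iff₀ hNpos]
    nlinarith [Real.pi_pos, hωle]
  -- the entry identity
  have hmv : (dft (2 ^ (j + k + 1))).mulVec (haar1 (j + k + 1) j n e) i
      = ∑ t : Fin (2 ^ (j + k + 1)),
          Complex.exp (((θ : ℂ) * Complex.I) * (t.val : ℂ)) * haar1 (j + k + 1) j n e t := by
    simp only [Matrix.mulVec, dotProduct, dft, Matrix.of_apply]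
    refine Finset.sum_congr rfl fun t _ => ?_
    congr 1
    rw [hθdef, hωdef]
    push_cast
    ring
  have hk1 : j + k + 1 - j - 1 = k := by omega
  have hk2 : j + k + 1 - j = k + 1 := by omega
  set Gn : ℝ := ‖∑ s ∈ Finset.range (2 ^ k), Complex.exp ((θ : ℂ) * Complex.I) ^ s‖ with hGndef
  set Bn : ℝ := ‖1 + (if e then (-1 : ℂ) else 1)
      * Complex.exp ((θ : ℂ) * Complex.I) ^ (2 ^ k)‖ with hBndef
  have hGn0 : 0 ≤ Gn := norm_nonneg _
  have hBn0 : 0 ≤ Bn := norm_nonneg _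
  have hGn1 : Gn ≤ (2 : ℝ) ^ k := by
    rw [hGndef]
    calc ‖∑ s ∈ Finset.range (2 ^ k), Complex.exp ((θ : ℂ) * Complex.I) ^ s‖
        ≤ ∑ s ∈ Finset.range (2 ^ k), ‖Complex.exp ((θ : ℂ) * Complex.I) ^ s‖ :=
          norm_sum_le _ _
      _ = (2 : ℝ) ^ k := by
          simp only [norm_exp_real_mul_I_pow]
          simp
  have hBn2 : Bn ≤ 2 := by
    rw [hBndef]
    calc ‖1 + (if e then (-1 : ℂ) else 1) * Complex.exp ((θ : ℂ) * Complex.I) ^ (2 ^ k)‖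
        ≤ ‖(1 : ℂ)‖ + ‖(if e then (-1 : ℂ) else 1)
            * Complex.exp ((θ : ℂ) * Complex.I) ^ (2 ^ k)‖ := norm_add_le _ _
      _ ≤ 2 := by
          rw [norm_mul, norm_exp_real_mul_I_pow]
          rcases e <;> simp <;> norm_num
  have hκ : (Real.sqrt ((2 : ℝ) ^ (j + k + 1)))⁻¹
        * (2 : ℝ) ^ (((j : ℝ) - ((j + k + 1 : ℕ) : ℝ)) / 2)
      = (2 : ℝ) ^ ((j : ℝ) / 2) / (2 : ℝ) ^ (j + k + 1) := by
    rw [Real.sqrt_eq_rpow, ← Real.rpow_natCast 2 (j + k + 1),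
      ← Real.rpow_mul (by norm_num : (0:ℝ) ≤ 2), ← Real.rpow_neg (by norm_num : (0:ℝ) ≤ 2),
      ← Real.rpow_add two_pos, ← Real.rpow_sub two_pos]
    congr 1
    push_cast
    ring
  have hPeq : (Real.sqrt ((2 : ℝ) ^ (j + k + 1)))⁻¹
        * ‖(dft (2 ^ (j + k + 1))).mulVec (haar1 (j + k + 1) j n e) i‖
      = (2 : ℝ) ^ ((j : ℝ) / 2) / (2 : ℝ) ^ (j + k + 1) * (Gn * Bn) := by
    rw [hmv, haar_sum_eq (j + k + 1) j n hjk hn e ((θ : ℂ) * Complex.I), hk1, hk2]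
    rw [norm_mul, norm_mul, norm_mul, Complex.norm_real,
      norm_exp_real_mul_I_pow θ (n * 2 ^ (k + 1)), Real.norm_eq_abs,
      abs_of_pos (Real.rpow_pos_of_pos two_pos _)]
    rw [hGndef, hBndef, ← hκ]
    ring
  have hsqrtT : Real.sqrt ((2 : ℝ) ^ j) = (2 : ℝ) ^ ((j : ℝ) / 2) := by
    rw [Real.sqrt_eq_rpow, ← Real.rpow_natCast 2 j,
      ← Real.rpow_mul (by norm_num : (0:ℝ) ≤ 2)]
    congr 1
    ring
  have hTT : (2 : ℝ) ^ ((j : ℝ) / 2) * (2 : ℝ) ^ ((j : ℝ) / 2) = (2 : ℝ) ^ j := by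
    rw [← Real.rpow_add two_pos, ← Real.rpow_natCast 2 j]
    congr 1
    ring
  have hJpos : (0 : ℝ) < (2 : ℝ) ^ ((j : ℝ) / 2) := Real.rpow_pos_of_pos two_pos _
  have hNsplit : (2 : ℝ) ^ (j + k + 1) = 2 ^ j * 2 ^ k * 2 := by
    rw [pow_succ, pow_add]
  have hKpos : (0 : ℝ) < (2 : ℝ) ^ k := by positivity
  -- bound E1
  have E1 : (Real.sqrt ((2 : ℝ) ^ (j + k + 1)))⁻¹
        * ‖(dft (2 ^ (j + k + 1))).mulVec (haar1 (j + k + 1) j n e) i‖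
      ≤ (2 : ℝ) ^ ((j : ℝ) / 2) / (2 : ℝ) ^ j := by
    rw [hPeq]
    have h1 : Gn * Bn ≤ 2 ^ k * 2 :=
      mul_le_mul hGn1 hBn2 hBn0 (by positivity)
    calc (2 : ℝ) ^ ((j : ℝ) / 2) / (2 : ℝ) ^ (j + k + 1) * (Gn * Bn)
        ≤ (2 : ℝ) ^ ((j : ℝ) / 2) / (2 : ℝ) ^ (j + k + 1) * (2 ^ k * 2) := by
          exact mul_le_mul_of_nonneg_left h1 (by positivity)
      _ = (2 : ℝ) ^ ((j : ℝ) / 2) / (2 : ℝ) ^ j := by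
          rw [hNsplit]; field_simp
  -- bound E2
  have E2 : (Real.sqrt ((2 : ℝ) ^ (j + k + 1)))⁻¹
        * ‖(dft (2 ^ (j + k + 1))).mulVec (haar1 (j + k + 1) j n e) i‖
      ≤ (2 : ℝ) ^ ((j : ℝ) / 2) / W := by
    by_cases hω0 : ω = 0
    · have hWone : W = 1 := by rw [hWdef, hω0]; simp [obar]
      rw [hWone, div_one]
      refine E1.trans ?_
      calc (2 : ℝ) ^ ((j : ℝ) / 2) / (2 : ℝ) ^ j ≤ (2 : ℝ) ^ ((j : ℝ) / 2) / 1 := by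
            apply div_le_div_of_nonneg_left hJpos.le (by norm_num) (one_le_pow₀ (by norm_num))
        _ = (2 : ℝ) ^ ((j : ℝ) / 2) := div_one _
    · have hWeq : W = |(ω : ℝ)| := by
        rw [hWdef]
        refine max_eq_right ?_
        have := Int.one_le_abs hω0
        calc (1:ℝ) = ((1:ℤ):ℝ) := by norm_num
          _ ≤ ((|ω| : ℤ) : ℝ) := by exact_mod_cast this
          _ = |(ω : ℝ)| := Int.cast_abs
      have hlow : (4 : ℝ) * W / (2 : ℝ) ^ (j + k + 1)
          ≤ ‖1 - Complex.exp ((θ : ℂ) * Complex.I)‖ := by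
        rw [norm_one_sub_exp_mul_I θ]
        have habs2 : |θ / 2| = |θ| / 2 := by rw [abs_div, abs_two]
        have hjord := Real.mul_abs_le_abs_sin (x := θ / 2)
          (by rw [habs2]; linarith)
        rw [habs2, hθabs] at hjord
        have hsimp : 2 / Real.pi * (2 * Real.pi * |(ω : ℝ)| / (2 : ℝ) ^ (j + k + 1) / 2)
            = 2 * |(ω : ℝ)| / (2 : ℝ) ^ (j + k + 1) := by
          field_simp
        rw [hsimp] at hjord
        rw [hWeq]
        rw [div_le_iff₀ hNpos] at hjord ⊢
        linarith
      have hqne : Complex.exp ((θ : ℂ) * Complex.I) ≠ 1 := by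
        intro h
        rw [h] at hlow
        simp only [sub_self, norm_zero] at hlow
        have : (0 : ℝ) < 4 * W / (2 : ℝ) ^ (j + k + 1) := by positivity
        linarith
      have hGgeom : Gn ≤ (2 : ℝ) ^ (j + k + 1) / (2 * W) := by
        rw [hGndef, geom_sum_eq hqne, norm_div]
        have hnum : ‖Complex.exp ((θ : ℂ) * Complex.I) ^ (2 ^ k) - 1‖ ≤ 2 := by
          calc ‖Complex.exp ((θ : ℂ) * Complex.I) ^ (2 ^ k) - 1‖
              ≤ ‖Complex.exp ((θ : ℂ) * Complex.I) ^ (2 ^ k)‖ + ‖(1:ℂ)‖ := norm_sub_le _ _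
            _ = 2 := by rw [norm_exp_real_mul_I_pow]; norm_num
        have hden : ‖Complex.exp ((θ : ℂ) * Complex.I) - 1‖
            = ‖1 - Complex.exp ((θ : ℂ) * Complex.I)‖ := norm_sub_rev _ _
        calc ‖Complex.exp ((θ : ℂ) * Complex.I) ^ (2 ^ k) - 1‖
              / ‖Complex.exp ((θ : ℂ) * Complex.I) - 1‖
            ≤ 2 / (4 * W / (2 : ℝ) ^ (j + k + 1)) := by
              apply div_le_div₀ (by norm_num) hnum (by positivity)
              rw [hden]; exact hlow
          _ = (2 : ℝ) ^ (j + k + 1) / (2 * W) := by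
              field_simp
              ring
      rw [hPeq]
      have h1 : Gn * Bn ≤ (2 : ℝ) ^ (j + k + 1) / (2 * W) * 2 :=
        mul_le_mul hGgeom hBn2 hBn0 (by positivity)
      calc (2 : ℝ) ^ ((j : ℝ) / 2) / (2 : ℝ) ^ (j + k + 1) * (Gn * Bn)
          ≤ (2 : ℝ) ^ ((j : ℝ) / 2) / (2 : ℝ) ^ (j + k + 1)
              * ((2 : ℝ) ^ (j + k + 1) / (2 * W) * 2) := by
            exact mul_le_mul_of_nonneg_left h1 (by positivity)
        _ = (2 : ℝ) ^ ((j : ℝ) / 2) / W := by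
            field_simp
  -- bound E3 (only used when e = true)
  have E3 : e = true → (Real.sqrt ((2 : ℝ) ^ (j + k + 1)))⁻¹
        * ‖(dft (2 ^ (j + k + 1))).mulVec (haar1 (j + k + 1) j n e) i‖
      ≤ Real.pi / 2 * (W * (2 : ℝ) ^ ((j : ℝ) / 2) / ((2 : ℝ) ^ j) ^ 2) := by
    intro he
    have hθω : |θ| ≤ 2 * Real.pi * W / (2 : ℝ) ^ (j + k + 1) := by
      rw [hθabs]
      gcongr
    have hBB : Bn ≤ (2 : ℝ) ^ k * (2 * Real.pi * W / (2 : ℝ) ^ (j + k + 1)) := by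
      rw [hBndef, he]
      rw [show (1 : ℂ) + (if (true : Bool) = true then (-1 : ℂ) else 1)
            * Complex.exp ((θ : ℂ) * Complex.I) ^ (2 ^ k)
          = 1 - Complex.exp ((θ : ℂ) * Complex.I) ^ (2 ^ k) by
        rw [if_pos rfl]; ring]
      rw [exp_real_mul_I_pow θ (2 ^ k), norm_one_sub_exp_mul_I]
      have hb : |((2 ^ k : ℕ) : ℝ) * θ / 2| = ((2 ^ k : ℕ) : ℝ) * |θ| / 2 := by
        rw [abs_div, abs_mul, abs_two, abs_of_nonneg (by positivity : (0:ℝ) ≤ ((2 ^ k : ℕ) : ℝ))]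
      calc 2 * |Real.sin (((2 ^ k : ℕ) : ℝ) * θ / 2)|
          ≤ 2 * |((2 ^ k : ℕ) : ℝ) * θ / 2| := by
            have := Real.abs_sin_le_abs (x := ((2 ^ k : ℕ) : ℝ) * θ / 2)
            linarith
        _ = ((2 ^ k : ℕ) : ℝ) * |θ| := by rw [hb]; ring
        _ ≤ ((2 ^ k : ℕ) : ℝ) * (2 * Real.pi * W / (2 : ℝ) ^ (j + k + 1)) := by
            exact mul_le_mul_of_nonneg_left hθω (by positivity)
        _ = (2 : ℝ) ^ k * (2 * Real.pi * W / (2 : ℝ) ^ (j + k + 1)) := by push_cast; ring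
    rw [hPeq]
    have h1 : Gn * Bn ≤ (2 : ℝ) ^ k * ((2 : ℝ) ^ k * (2 * Real.pi * W / (2 : ℝ) ^ (j + k + 1))) :=
      mul_le_mul hGn1 hBB hBn0 hKpos.le
    calc (2 : ℝ) ^ ((j : ℝ) / 2) / (2 : ℝ) ^ (j + k + 1) * (Gn * Bn)
        ≤ (2 : ℝ) ^ ((j : ℝ) / 2) / (2 : ℝ) ^ (j + k + 1)
            * ((2 : ℝ) ^ k * ((2 : ℝ) ^ k * (2 * Real.pi * W / (2 : ℝ) ^ (j + k + 1)))) := by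
          exact mul_le_mul_of_nonneg_left h1 (by positivity)
      _ = Real.pi / 2 * (W * (2 : ℝ) ^ ((j : ℝ) / 2) / ((2 : ℝ) ^ j) ^ 2) := by
          rw [hNsplit]; field_simp
  -- conclusion
  have hsWpos : (0 : ℝ) < Real.sqrt W := Real.sqrt_pos.mpr hWpos
  refine ⟨?_, ?_⟩
  · rw [mul_min_of_nonneg _ _ (by positivity : (0:ℝ) ≤ 4 * (Real.sqrt W)⁻¹)]
    refine le_min ?_ ?_
    · have hM1 : (Real.sqrt W)⁻¹ * (((2 : ℝ) ^ j) / W) ^ ((1 : ℝ) / 2)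
          = (2 : ℝ) ^ ((j : ℝ) / 2) / W := by
        rw [← Real.sqrt_eq_rpow, Real.sqrt_div hTpos.le, hsqrtT, inv_mul_eq_div, div_div,
          Real.mul_self_sqrt hWpos.le]
      calc (Real.sqrt ((2 : ℝ) ^ (j + k + 1)))⁻¹
            * ‖(dft (2 ^ (j + k + 1))).mulVec (haar1 (j + k + 1) j n e) i‖
          ≤ (2 : ℝ) ^ ((j : ℝ) / 2) / W := E2
        _ = 1 * ((Real.sqrt W)⁻¹ * (((2 : ℝ) ^ j) / W) ^ ((1 : ℝ) / 2)) := by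
            rw [hM1, one_mul]
        _ ≤ 4 * (Real.sqrt W)⁻¹ * (((2 : ℝ) ^ j) / W) ^ ((1 : ℝ) / 2) := by
            rw [mul_assoc]
            exact mul_le_mul_of_nonneg_right (by norm_num) (by positivity)
    · rcases e with _ | _
      · simp only [Bool.false_eq_true, if_false, add_zero]
        have hM2 : (Real.sqrt W)⁻¹ * (W / ((2 : ℝ) ^ j)) ^ ((1 : ℝ) / 2)
            = (2 : ℝ) ^ ((j : ℝ) / 2) / (2 : ℝ) ^ j := by
          rw [← Real.sqrt_eq_rpow, Real.sqrt_div hWpos.le, hsqrtT, ← mul_div_assoc,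
            inv_mul_cancel₀ (ne_of_gt hsWpos), div_eq_div_iff (ne_of_gt hJpos) (ne_of_gt hTpos), one_mul]
          exact hTT.symm
        calc (Real.sqrt ((2 : ℝ) ^ (j + k + 1)))⁻¹
              * ‖(dft (2 ^ (j + k + 1))).mulVec (haar1 (j + k + 1) j n false) i‖
            ≤ (2 : ℝ) ^ ((j : ℝ) / 2) / (2 : ℝ) ^ j := E1
          _ = 1 * ((Real.sqrt W)⁻¹ * (W / ((2 : ℝ) ^ j)) ^ ((1 : ℝ) / 2)) := by
              rw [hM2, one_mul]
          _ ≤ 4 * (Real.sqrt W)⁻¹ * (W / ((2 : ℝ) ^ j)) ^ ((1 : ℝ) / 2) := by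
              rw [mul_assoc]
              exact mul_le_mul_of_nonneg_right (by norm_num) (by positivity)
      · rw [show (1 : ℝ) / 2 + (if (true : Bool) = true then (1:ℝ) else 0) = (1:ℝ)/2 + 1 by norm_num]
        have hM2 : (Real.sqrt W)⁻¹ * (W / ((2 : ℝ) ^ j)) ^ ((1 : ℝ) / 2 + 1)
            = W * (2 : ℝ) ^ ((j : ℝ) / 2) / ((2 : ℝ) ^ j) ^ 2 := by
          rw [Real.rpow_add (div_pos hWpos hTpos), Real.rpow_one, ← Real.sqrt_eq_rpow,
            Real.sqrt_div hWpos.le, hsqrtT]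
          calc (Real.sqrt W)⁻¹ * (Real.sqrt W / (2 : ℝ) ^ ((j : ℝ) / 2) * (W / (2 : ℝ) ^ j))
              = ((Real.sqrt W)⁻¹ * Real.sqrt W)
                  * (W / ((2 : ℝ) ^ ((j : ℝ) / 2) * (2 : ℝ) ^ j)) := by ring
            _ = W / ((2 : ℝ) ^ ((j : ℝ) / 2) * (2 : ℝ) ^ j) := by
                rw [inv_mul_cancel₀ (ne_of_gt hsWpos), one_mul]
            _ = W * (2 : ℝ) ^ ((j : ℝ) / 2) / ((2 : ℝ) ^ j) ^ 2 := by
                rw [div_eq_div_iff (by positivity) (by positivity)]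
                linear_combination (-(W * (2 : ℝ) ^ j)) * hTT
        calc (Real.sqrt ((2 : ℝ) ^ (j + k + 1)))⁻¹
              * ‖(dft (2 ^ (j + k + 1))).mulVec (haar1 (j + k + 1) j n true) i‖
            ≤ Real.pi / 2 * (W * (2 : ℝ) ^ ((j : ℝ) / 2) / ((2 : ℝ) ^ j) ^ 2) := E3 rfl
          _ = Real.pi / 2 * ((Real.sqrt W)⁻¹ * (W / ((2 : ℝ) ^ j)) ^ ((1 : ℝ) / 2 + 1)) := by
              rw [hM2]
          _ ≤ 4 * (Real.sqrt W)⁻¹ * (W / ((2 : ℝ) ^ j)) ^ ((1 : ℝ) / 2 + 1) := by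
              rw [mul_assoc]
              exact mul_le_mul_of_nonneg_right
                (by linarith [Real.pi_le_four]) (by positivity)
  · rcases le_total W ((2 : ℝ) ^ j) with h | h
    · rw [max_eq_right h, mul_div_assoc]
      refine E1.trans ?_
      have h0 : (0 : ℝ) < (2 : ℝ) ^ ((j : ℝ) / 2) / (2 : ℝ) ^ j := div_pos hJpos hTpos
      linarith
    · rw [max_eq_left h, mul_div_assoc]
      refine E2.trans ?_
      have h0 : (0 : ℝ) < (2 : ℝ) ^ ((j : ℝ) / 2) / W := div_pos hJpos hWpos
      linarith

end
end
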